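/- arXiv:1509.08519 — 6 statements merged into one kernel-verified Lean document; each statement's English description precedes it below -/
import Mathlib

section
/- (Theorem 4) For all real numbers r, s, v, one has φ(r,s;r,v)·φ(r,v;s,v) ≥ [ξ(r,v)·(ξ(s,(r+v)/2) − ξ((r+s)/2,(s+v)/2)) + (ξ(r,(s+v)/2) − ξ((r+s)/2,(r+v)/2))·(ξ(v,(r+s)/2) − ξ((r+v)/2,(s+v)/2))]², where ξ(s,t) := λ_s λ_t − (λ_{(s+t)/2})² and φ(s,t;u,v) := ξ(s,t)·ξ(u,v) − [ξ((s+u)/2,(t+v)/2) − ξ((s+v)/2,(t+u)/2)]². -/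
open MeasureTheory

/-- The moment difference `λ_s(X)` of a positive random variable `X`. -/
noncomputable def momentLambda {Ω : Type*} [MeasurableSpace Ω] (μ : Measure Ω) (X : Ω → ℝ)
    (s : ℝ) : ℝ :=
  if s = 0 then Real.log (∫ ω, X ω ∂μ) - ∫ ω, Real.log (X ω) ∂μ
  else if s = 1 then (∫ ω, X ω * Real.log (X ω) ∂μ) - (∫ ω, X ω ∂μ) * Real.log (∫ ω, X ω ∂μ)
  else ((∫ ω, X ω ^ s ∂μ) - (∫ ω, X ω ∂μ) ^ s) / (s * (s - 1))

/-- `ξ(s,t) := λ_s λ_t - (λ_{(s+t)/2})²`. -/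
noncomputable def momentXi {Ω : Type*} [MeasurableSpace Ω] (μ : Measure Ω) (X : Ω → ℝ)
    (s t : ℝ) : ℝ :=
  momentLambda μ X s * momentLambda μ X t - (momentLambda μ X ((s + t) / 2)) ^ 2

/-- `φ(s,t;u,v) := ξ(s,t)ξ(u,v) - [ξ((s+u)/2,(t+v)/2) - ξ((s+v)/2,(t+u)/2)]²`. -/
noncomputable def momentPhi {Ω : Type*} [MeasurableSpace Ω] (μ : Measure Ω) (X : Ω → ℝ)
    (s t u v : ℝ) : ℝ :=
  momentXi μ X s t * momentXi μ X u v -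
    (momentXi μ X ((s + u) / 2) ((t + v) / 2) - momentXi μ X ((s + v) / 2) ((t + u) / 2)) ^ 2

section aux
open intervalIntegral

section helpers
variable {c x : ℝ}

private lemma sqrt_cs {α : Type*} [MeasurableSpace α] {ν : Measure α} {f g h : α → ℝ}
    (hf : Integrable f ν) (hg : Integrable g ν)
    (hf0 : 0 ≤ᵐ[ν] f) (hg0 : 0 ≤ᵐ[ν] g) (hh0 : 0 ≤ᵐ[ν] h)
    (hle : ∀ᵐ x ∂ν, h x ≤ Real.sqrt (f x * g x)) :
    ∫ x, h x ∂ν ≤ Real.sqrt (∫ x, f x ∂ν) * Real.sqrt (∫ x, g x ∂ν) := by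
  set L := ∫ x, h x ∂ν with hL
  set F := ∫ x, f x ∂ν with hF
  set G := ∫ x, g x ∂ν with hG
  have hL0 : 0 ≤ L := integral_nonneg_of_ae hh0
  have hF0 : 0 ≤ F := integral_nonneg_of_ae hf0
  have hG0 : 0 ≤ G := integral_nonneg_of_ae hg0
  have key : ∀ t : ℝ, 0 < t → 2 * L * t ≤ F * t ^ 2 + G := by
    intro t ht
    have hpt : ∀ᵐ x ∂ν, h x ≤ (t * f x + g x / t) / 2 := by
      filter_upwards [hle, hf0, hg0] with x h1 h2 h3
      refine h1.trans ?_
      have e1 : Real.sqrt (f x * g x) = Real.sqrt (t * f x) * Real.sqrt (g x / t) := by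
        rw [← Real.sqrt_mul (mul_nonneg ht.le h2)]
        congr 1
        field_simp
      rw [e1]
      nlinarith [sq_nonneg (Real.sqrt (t * f x) - Real.sqrt (g x / t)),
        Real.sq_sqrt (mul_nonneg ht.le h2),
        Real.sq_sqrt (div_nonneg h3 ht.le)]
    have hint : Integrable (fun x => (t * f x + g x / t) / 2) ν := by
      exact (((hf.const_mul t).add (hg.div_const t)).div_const 2)
    have := integral_mono_of_nonneg hh0 hint hpt
    rw [hL]
    have e2 : ∫ x, (t * f x + g x / t) / 2 ∂ν = (t * F + G / t) / 2 := by
      rw [MeasureTheory.integral_div, integral_add (hf.const_mul t) (hg.div_const t),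
        MeasureTheory.integral_const_mul, MeasureTheory.integral_div]
    rw [e2] at this
    have ht' : t ≠ 0 := ne_of_gt ht
    calc 2 * L * t ≤ 2 * ((t * F + G / t) / 2) * t := by nlinarith
      _ = F * t ^ 2 + G := by field_simp
  have hq : ∀ t : ℝ, 0 ≤ F * (t * t) + (-(2 * L)) * t + G := by
    intro t
    rcases le_or_gt t 0 with ht | ht
    · nlinarith
    · nlinarith [key t ht]
  have hd := discrim_le_zero hq
  rw [discrim] at hd
  have hLsq : L ^ 2 ≤ F * G := by nlinarith
  calc L = Real.sqrt (L ^ 2) := by rw [Real.sqrt_sq hL0]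
    _ ≤ Real.sqrt (F * G) := Real.sqrt_le_sqrt hLsq
    _ = Real.sqrt F * Real.sqrt G := Real.sqrt_mul hF0 _


noncomputable def Jfun (c x s : ℝ) : ℝ := ∫ u in Set.uIoc c x, |x - u| * u ^ (s - 2)

lemma upos {c x : ℝ} (hc : 0 < c) (hx : 0 < x) : ∀ u ∈ Set.uIoc c x, 0 < u :=
  fun _ hu => lt_trans (lt_min hc hx) hu.1

lemma uposIcc {c x : ℝ} (hc : 0 < c) (hx : 0 < x) : ∀ u ∈ Set.uIcc c x, 0 < u :=
  fun _ hu => lt_of_lt_of_le (lt_min hc hx) hu.1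

lemma zero_notin {c x : ℝ} (hc : 0 < c) (hx : 0 < x) : (0:ℝ) ∉ Set.uIcc c x :=
  Set.notMem_uIcc_of_lt hc hx

lemma Jnonneg {c x : ℝ} (hc : 0 < c) (hx : 0 < x) (s : ℝ) : 0 ≤ Jfun c x s := by
  apply setIntegral_nonneg measurableSet_uIoc
  intro u hu
  have := upos hc hx u hu
  positivity

lemma intInt {c x : ℝ} (hc : 0 < c) (hx : 0 < x) (p : ℝ) :
    IntervalIntegrable (fun u : ℝ => u ^ p) volume c x :=
  intervalIntegrable_rpow (Or.inr (zero_notin hc hx))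

lemma split_integral {c x : ℝ} (hc : 0 < c) (hx : 0 < x) (s : ℝ) (a b : ℝ)
    (ha : 0 < a) (hb : 0 < b) (hsub : Set.uIcc a b ⊆ Set.uIcc c x) :
    (∫ u in a..b, (x - u) * u ^ (s-2)) =
      x * (∫ u in a..b, u ^ (s - 2)) - ∫ u in a..b, u ^ (s - 1) := by
  rw [integral_congr (g := fun u => x * u ^ (s-2) - u ^ (s-1)) (fun u hu => by
    have hu0 : 0 < u := uposIcc hc hx u (hsub hu)
    have : u ^ (s-1) = u ^ (s-2) * u := by
      rw [show s - 1 = (s-2) + 1 by ring, Real.rpow_add_one hu0.ne']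
    simp only [this]; ring)]
  rw [integral_sub (((intervalIntegrable_rpow (Or.inr
      (fun h => zero_notin hc hx (hsub h)))).const_mul x))
      (intervalIntegrable_rpow (Or.inr (fun h => zero_notin hc hx (hsub h)))),
    intervalIntegral.integral_const_mul]

lemma JA {c x : ℝ} (hc : 0 < c) (hx : 0 < x) (s : ℝ) :
    Jfun c x s = x * (∫ u in c..x, u ^ (s - 2)) - ∫ u in c..x, u ^ (s - 1) := by
  rcases le_total c x with h | h
  · have e1 : Set.uIoc c x = Set.Ioc c x := Set.uIoc_of_le h
    have e2 : Jfun c x s = ∫ u in Set.Ioc c x, (x - u) * u ^ (s-2) := by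
      rw [Jfun, e1]
      apply setIntegral_congr_fun measurableSet_Ioc
      intro u hu
      simp only
      rw [abs_of_nonneg (by linarith [hu.2] : (0:ℝ) ≤ x - u)]
    rw [e2, ← intervalIntegral.integral_of_le h]
    exact split_integral hc hx s c x hc hx (subset_refl _)
  · have e1 : Set.uIoc c x = Set.Ioc x c := Set.uIoc_of_ge h
    have e2 : Jfun c x s = ∫ u in Set.Ioc x c, -((x - u) * u ^ (s-2)) := by
      rw [Jfun, e1]
      apply setIntegral_congr_fun measurableSet_Ioc
      intro u hu
      simp only
      rw [abs_of_nonpos (by linarith [hu.1] : x - u ≤ 0)]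
      ring
    rw [e2, ← intervalIntegral.integral_of_le h, intervalIntegral.integral_neg,
      split_integral hc hx s x c hx hc
        (Set.uIcc_subset_uIcc Set.right_mem_uIcc Set.left_mem_uIcc),
      intervalIntegral.integral_symm c x (f := fun u : ℝ => u ^ (s-2)),
      intervalIntegral.integral_symm c x (f := fun u : ℝ => u ^ (s-1))]
    ring


end helpers

section helpers2
variable {c x : ℝ}
variable {c x : ℝ}
lemma Jgen (hc : 0 < c) (hx : 0 < x) {s : ℝ} (hs0 : s ≠ 0) (hs1 : s ≠ 1) :
    Jfun c x s = (x ^ s - c ^ s - s * c ^ (s-1) * (x - c)) / (s * (s - 1)) := by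
  rw [JA hc hx s,
    integral_rpow (Or.inr ⟨by intro h; apply hs1; linarith [sub_eq_iff_eq_add.mp h],
      zero_notin hc hx⟩),
    integral_rpow (Or.inr ⟨by intro h; apply hs0; linarith [sub_eq_iff_eq_add.mp h],
      zero_notin hc hx⟩)]
  have e1 : s - 2 + 1 = s - 1 := by ring
  have e2 : s - 1 + 1 = s := by ring
  rw [e1, e2]
  have hxs : x ^ s = x ^ (s-1) * x := by
    rw [← Real.rpow_add_one hx.ne' (s-1), e2]
  have hcs : c ^ s = c ^ (s-1) * c := by
    rw [← Real.rpow_add_one hc.ne' (s-1), e2]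
  have h1 : s - 1 ≠ 0 := sub_ne_zero.mpr hs1
  field_simp
  rw [hxs, hcs]
  ring

lemma J0 (hc : 0 < c) (hx : 0 < x) :
    Jfun c x 0 = x / c - 1 - Real.log x + Real.log c := by
  rw [JA hc hx 0]
  have e1 : (0:ℝ) - 2 = -2 := by norm_num
  have e2 : (0:ℝ) - 1 = -1 := by norm_num
  rw [e1, e2]
  rw [integral_rpow (Or.inr ⟨by norm_num, zero_notin hc hx⟩)]
  have : (∫ u in c..x, u ^ (-1:ℝ)) = Real.log x - Real.log c := by
    rw [intervalIntegral.integral_congr (g := fun u : ℝ => u⁻¹)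
      (fun u hu => Real.rpow_neg_one u), integral_inv (zero_notin hc hx),
      Real.log_div hx.ne' hc.ne']
  rw [this]
  norm_num
  rw [Real.rpow_neg_one, Real.rpow_neg_one]
  field_simp
  ring
variable {c x : ℝ}
lemma J1 (hc : 0 < c) (hx : 0 < x) :
    Jfun c x 1 = x * (Real.log x - Real.log c) - (x - c) := by
  rw [JA hc hx 1]
  have e1 : (1:ℝ) - 2 = -1 := by norm_num
  have e2 : (1:ℝ) - 1 = 0 := by norm_num
  rw [e1, e2]
  have h1 : (∫ u in c..x, u ^ (-1:ℝ)) = Real.log x - Real.log c := by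
    rw [intervalIntegral.integral_congr (g := fun u : ℝ => u⁻¹)
      (fun u hu => Real.rpow_neg_one u), integral_inv (zero_notin hc hx),
      Real.log_div hx.ne' hc.ne']
  have h2 : (∫ u in c..x, u ^ (0:ℝ)) = x - c := by
    rw [intervalIntegral.integral_congr (g := fun u : ℝ => 1)
      (fun u hu => Real.rpow_zero u)]
    simp
  rw [h1, h2]

lemma Jintegrable (hc : 0 < c) (hx : 0 < x) (s : ℝ) :
    IntegrableOn (fun u : ℝ => |x - u| * u ^ (s - 2)) (Set.uIoc c x) volume := by
  rw [← intervalIntegrable_iff]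
  apply ContinuousOn.intervalIntegrable
  apply ContinuousOn.mul
  · exact ((continuous_const.sub continuous_id).abs).continuousOn
  · intro u hu
    exact (Real.continuousAt_rpow_const u (s-2)
      (Or.inl (uposIcc hc hx u hu).ne')).continuousWithinAt


end helpers2

section helpers
variable {c x : ℝ}

lemma Jmid (hc : 0 < c) (hx : 0 < x) (a b : ℝ) :
    Jfun c x ((a + b) / 2) ≤ Real.sqrt (Jfun c x a * Jfun c x b) := by
  have hnn : ∀ s : ℝ, 0 ≤ᵐ[volume.restrict (Set.uIoc c x)]
      fun u : ℝ => |x - u| * u ^ (s - 2) := by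
    intro s
    refine (ae_restrict_iff' measurableSet_uIoc).2 (ae_of_all _ fun u hu => ?_)
    have := upos hc hx u hu
    positivity
  have main := sqrt_cs (ν := volume.restrict (Set.uIoc c x))
    (f := fun u : ℝ => |x - u| * u ^ (a - 2)) (g := fun u : ℝ => |x - u| * u ^ (b - 2))
    (h := fun u : ℝ => |x - u| * u ^ ((a + b) / 2 - 2))
    (Jintegrable hc hx a) (Jintegrable hc hx b) (hnn a) (hnn b) (hnn _) ?_
  · calc Jfun c x ((a+b)/2) ≤ Real.sqrt (Jfun c x a) * Real.sqrt (Jfun c x b) := main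
      _ = Real.sqrt (Jfun c x a * Jfun c x b) :=
        (Real.sqrt_mul (Jnonneg hc hx a) _).symm
  · refine (ae_restrict_iff' measurableSet_uIoc).2 (ae_of_all _ fun u hmem => ?_)
    have hu0 : 0 < u := upos hc hx u hmem
    have e : (|x - u| * u ^ (a - 2)) * (|x - u| * u ^ (b - 2))
        = (|x - u| * u ^ ((a + b) / 2 - 2)) ^ 2 := by
      have e2 : u ^ (a-2) * u ^ (b-2) = u ^ ((a+b)/2-2) * u ^ ((a+b)/2-2) := by
        rw [← Real.rpow_add hu0, ← Real.rpow_add hu0]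
        ring_nf
      rw [pow_two]
      linear_combination (|x - u| * |x - u|) * e2
    rw [e, Real.sqrt_sq (by positivity)]

end helpers

end aux

section main

variable {Ω : Type*} [MeasurableSpace Ω] (μ : Measure Ω) [IsProbabilityMeasure μ]
    (X : Ω → ℝ) (hX : Measurable X) (hpos : ∀ᵐ ω ∂μ, 0 < X ω)
    (hmom : ∀ s : ℝ, Integrable (fun ω => X ω ^ s) μ)
    (hlog : Integrable (fun ω => Real.log (X ω)) μ)
    (hxlog : Integrable (fun ω => X ω * Real.log (X ω)) μ)

include hX hpos hmom hlog hxlog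

lemma cpos : 0 < ∫ ω, X ω ∂μ := by
  have hX1 : Integrable X μ := by simpa [Real.rpow_one] using hmom 1
  rw [integral_pos_iff_support_of_nonneg_ae (hpos.mono fun ω h => h.le) hX1]
  have h1 : μ {ω | 0 < X ω} = 1 := by
    have hcm : μ {ω | 0 < X ω}ᶜ = 0 := by
      rw [Set.compl_setOf]
      exact ae_iff.mp hpos
    have h2 := measure_add_measure_compl (μ := μ) (s := {ω | 0 < X ω})
      (measurableSet_lt measurable_const hX)
    rw [hcm, add_zero, measure_univ] at h2
    exact h2
  have hsub : {ω | 0 < X ω} ⊆ Function.support X := fun ω h => ne_of_gt h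
  calc (0:ENNReal) < 1 := by norm_num
    _ = μ {ω | 0 < X ω} := h1.symm
    _ ≤ μ (Function.support X) := measure_mono hsub

lemma lam_eq (t : ℝ) :
    momentLambda μ X t = ∫ ω, Jfun (∫ ω', X ω' ∂μ) (X ω) t ∂μ ∧
      Integrable (fun ω => Jfun (∫ ω', X ω' ∂μ) (X ω) t) μ := by
  set c := ∫ ω', X ω' ∂μ with hcdef
  have hc : 0 < c := cpos μ X hX hpos hmom hlog hxlog
  have hX1 : Integrable X μ := by simpa [Real.rpow_one] using hmom 1
  by_cases h0 : t = 0
  · subst h0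
    have hae : (fun ω => Jfun c (X ω) 0) =ᵐ[μ]
        fun ω => X ω / c - 1 - Real.log (X ω) + Real.log c := by
      filter_upwards [hpos] with ω hω
      exact J0 hc hω
    have i1 : Integrable (fun ω => X ω / c) μ := hX1.div_const c
    have i2 : Integrable (fun ω => X ω / c - 1) μ := i1.sub (integrable_const 1)
    have i3 : Integrable (fun ω => X ω / c - 1 - Real.log (X ω)) μ := i2.sub hlog
    have hint : Integrable (fun ω => X ω / c - 1 - Real.log (X ω) + Real.log c) μ :=
      i3.add (integrable_const _)
    refine ⟨?_, hint.congr hae.symm⟩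
    rw [integral_congr_ae hae, MeasureTheory.integral_add i3 (integrable_const _),
      MeasureTheory.integral_sub i2 hlog, MeasureTheory.integral_sub i1 (integrable_const 1),
      MeasureTheory.integral_div, MeasureTheory.integral_const, MeasureTheory.integral_const]
    simp only [measure_univ, probReal_univ, one_smul, smul_eq_mul, one_mul]
    rw [momentLambda, if_pos rfl, ← hcdef]
    field_simp
    ring
  · by_cases h1 : t = 1
    · subst h1
      have hae : (fun ω => Jfun c (X ω) 1) =ᵐ[μ]
          fun ω => X ω * Real.log (X ω) - X ω * Real.log c - X ω + c := by
        filter_upwards [hpos] with ω hω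
        rw [J1 hc hω]; ring
      have i1 : Integrable (fun ω => X ω * Real.log c) μ := hX1.mul_const _
      have i2 : Integrable (fun ω => X ω * Real.log (X ω) - X ω * Real.log c) μ :=
        hxlog.sub i1
      have i3 : Integrable (fun ω => X ω * Real.log (X ω) - X ω * Real.log c - X ω) μ :=
        i2.sub hX1
      have hint : Integrable
          (fun ω => X ω * Real.log (X ω) - X ω * Real.log c - X ω + c) μ :=
        i3.add (integrable_const _)
      refine ⟨?_, hint.congr hae.symm⟩
      rw [integral_congr_ae hae, MeasureTheory.integral_add i3 (integrable_const _),
        MeasureTheory.integral_sub i2 hX1, MeasureTheory.integral_sub hxlog i1,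
        MeasureTheory.integral_mul_const, MeasureTheory.integral_const]
      simp only [measure_univ, probReal_univ, one_smul, smul_eq_mul, one_mul]
      rw [momentLambda, if_neg one_ne_zero, if_pos rfl, ← hcdef]
      ring
    · have hae : (fun ω => Jfun c (X ω) t) =ᵐ[μ]
          fun ω => (X ω ^ t - c ^ t - t * c ^ (t-1) * (X ω - c)) / (t * (t - 1)) := by
        filter_upwards [hpos] with ω hω
        exact Jgen hc hω h0 h1
      have i1 : Integrable (fun ω => X ω ^ t - c ^ t) μ := (hmom t).sub (integrable_const _)
      have i0 : Integrable (fun ω => X ω - c) μ := hX1.sub (integrable_const _)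
      have i2 : Integrable (fun ω => t * c ^ (t-1) * (X ω - c)) μ := i0.const_mul _
      have i3 : Integrable (fun ω => X ω ^ t - c ^ t - t * c ^ (t-1) * (X ω - c)) μ :=
        i1.sub i2
      have hint : Integrable
          (fun ω => (X ω ^ t - c ^ t - t * c ^ (t-1) * (X ω - c)) / (t * (t - 1))) μ :=
        i3.div_const _
      refine ⟨?_, hint.congr hae.symm⟩
      rw [integral_congr_ae hae, MeasureTheory.integral_div,
        MeasureTheory.integral_sub i1 i2,
        MeasureTheory.integral_sub (hmom t) (integrable_const _),
        MeasureTheory.integral_const, MeasureTheory.integral_const_mul,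
        MeasureTheory.integral_sub hX1 (integrable_const _), MeasureTheory.integral_const]
      simp only [measure_univ, probReal_univ, one_smul, smul_eq_mul, one_mul]
      rw [momentLambda, if_neg h0, if_neg h1, ← hcdef]
      rw [sub_self, mul_zero, sub_zero]

lemma lam_key (a b : ℝ) :
    (momentLambda μ X ((a + b) / 2)) ^ 2 ≤ momentLambda μ X a * momentLambda μ X b := by
  set c := ∫ ω', X ω' ∂μ with hcdef
  have hc : 0 < c := cpos μ X hX hpos hmom hlog hxlog
  obtain ⟨ea, ia⟩ := lam_eq μ X hX hpos hmom hlog hxlog a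
  obtain ⟨eb, ib⟩ := lam_eq μ X hX hpos hmom hlog hxlog b
  obtain ⟨em, -⟩ := lam_eq μ X hX hpos hmom hlog hxlog ((a + b) / 2)
  have hnn : ∀ t : ℝ, 0 ≤ᵐ[μ] fun ω => Jfun c (X ω) t := by
    intro t
    filter_upwards [hpos] with ω hω
    exact Jnonneg hc hω t
  have main := sqrt_cs (ν := μ) (f := fun ω => Jfun c (X ω) a)
    (g := fun ω => Jfun c (X ω) b) (h := fun ω => Jfun c (X ω) ((a + b) / 2))
    ia ib (hnn a) (hnn b) (hnn _) ?_
  · rw [ea, eb, em]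
    have hL0 : 0 ≤ ∫ ω, Jfun c (X ω) ((a+b)/2) ∂μ := integral_nonneg_of_ae (hnn _)
    have hF0 : 0 ≤ ∫ ω, Jfun c (X ω) a ∂μ := integral_nonneg_of_ae (hnn _)
    have hG0 : 0 ≤ ∫ ω, Jfun c (X ω) b ∂μ := integral_nonneg_of_ae (hnn _)
    nlinarith [Real.sq_sqrt hF0, Real.sq_sqrt hG0, Real.sqrt_nonneg (∫ ω, Jfun c (X ω) a ∂μ),
      Real.sqrt_nonneg (∫ ω, Jfun c (X ω) b ∂μ), main]
  · filter_upwards [hpos] with ω hω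
    exact Jmid hc hω a b

end main


theorem theorem4 {Ω : Type*} [MeasurableSpace Ω] (μ : Measure Ω) [IsProbabilityMeasure μ]
    (X : Ω → ℝ) (hX : Measurable X) (hpos : ∀ᵐ ω ∂μ, 0 < X ω)
    (hmom : ∀ s : ℝ, Integrable (fun ω => X ω ^ s) μ)
    (hlog : Integrable (fun ω => Real.log (X ω)) μ)
    (hxlog : Integrable (fun ω => X ω * Real.log (X ω)) μ)
    (r s v : ℝ) :
    momentPhi μ X r s r v * momentPhi μ X r v s v ≥
      (momentXi μ X (r) (v) * (momentXi μ X (s) ((r + v) / 2) - momentXi μ X ((r + s) / 2) ((s + v) / 2)) +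
        (momentXi μ X (r) ((s + v) / 2) - momentXi μ X ((r + s) / 2) ((r + v) / 2)) *
          (momentXi μ X (v) ((r + s) / 2) - momentXi μ X ((r + v) / 2) ((s + v) / 2))) ^ 2 := by
  have key := lam_key μ X hX hpos hmom hlog hxlog r v
  set DD : ℝ := momentLambda μ X r * momentLambda μ X s * momentLambda μ X v
      + 2 * momentLambda μ X ((r+s)/2) * momentLambda μ X ((r+v)/2) * momentLambda μ X ((s+v)/2)
      - momentLambda μ X r * momentLambda μ X ((s+v)/2) ^ 2
      - momentLambda μ X s * momentLambda μ X ((r+v)/2) ^ 2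
      - momentLambda μ X v * momentLambda μ X ((r+s)/2) ^ 2 with hDD
  have h1 : momentPhi μ X r s r v = momentLambda μ X r * DD := by
    simp only [momentPhi, momentXi, hDD]
    rw [show (r+r)/2 = r from by ring]
    rw [show (s+r)/2 = (r+s)/2 from by ring]
    rw [show (r + (s+v)/2)/2 = (2*r+s+v)/4 from by ring]
    rw [show ((r+v)/2 + (r+s)/2)/2 = (2*r+s+v)/4 from by ring]
    ring
  have h2 : momentPhi μ X r v s v = momentLambda μ X v * DD := by
    simp only [momentPhi, momentXi, hDD]
    rw [show (v+v)/2 = v from by ring]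
    rw [show (v+s)/2 = (s+v)/2 from by ring]
    rw [show ((r+s)/2 + v)/2 = (r+s+2*v)/4 from by ring]
    rw [show ((r+v)/2 + (s+v)/2)/2 = (r+s+2*v)/4 from by ring]
    ring
  have h3 : (momentXi μ X (r) (v) * (momentXi μ X (s) ((r + v) / 2) - momentXi μ X ((r + s) / 2) ((s + v) / 2)) +
        (momentXi μ X (r) ((s + v) / 2) - momentXi μ X ((r + s) / 2) ((r + v) / 2)) *
          (momentXi μ X (v) ((r + s) / 2) - momentXi μ X ((r + v) / 2) ((s + v) / 2)))
      = momentLambda μ X ((r+v)/2) * DD := by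
    simp only [momentXi, hDD]
    rw [show (s + (r+v)/2)/2 = (r+2*s+v)/4 from by ring]
    rw [show ((r+s)/2 + (s+v)/2)/2 = (r+2*s+v)/4 from by ring]
    rw [show (r + (s+v)/2)/2 = (2*r+s+v)/4 from by ring]
    rw [show ((r+s)/2 + (r+v)/2)/2 = (2*r+s+v)/4 from by ring]
    rw [show (v + (r+s)/2)/2 = (r+s+2*v)/4 from by ring]
    rw [show ((r+v)/2 + (s+v)/2)/2 = (r+s+2*v)/4 from by ring]
    ring
  rw [ge_iff_le, h1, h2, h3]
  nlinarith [mul_nonneg (sub_nonneg.mpr key) (sq_nonneg DD)]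
end

section
/- (Theorem 5) For all real numbers r, s, u, v, one has φ(r,s;s,u)·φ(r,s;s,v) ≥ [ξ(r,s)·(ξ(s,(u+v)/2) − ξ((s+u)/2,(s+v)/2)) − (ξ(s,(r+u)/2) − ξ((r+s)/2,(s+u)/2))·(ξ(s,(r+v)/2) − ξ((r+s)/2,(s+v)/2))]², where ξ(s,t) := λ_s λ_t − (λ_{(s+t)/2})² and φ(s,t;u,v) := ξ(s,t)·ξ(u,v) − [ξ((s+u)/2,(t+v)/2) − ξ((s+v)/2,(t+u)/2)]². -/
open MeasureTheory

lemma integral_cs {Z : Type*} [MeasurableSpace Z] (ν : Measure Z) (F G : Z → ℝ)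
    (hF2 : Integrable (fun z => F z ^ 2) ν) (hG2 : Integrable (fun z => G z ^ 2) ν)
    (hFG : Integrable (fun z => F z * G z) ν) :
    (∫ z, F z * G z ∂ν) ^ 2 ≤ (∫ z, F z ^ 2 ∂ν) * ∫ z, G z ^ 2 ∂ν := by
  have key : ∀ t : ℝ, 0 ≤ (∫ z, F z ^ 2 ∂ν) * (t * t) + (2 * ∫ z, F z * G z ∂ν) * t
      + ∫ z, G z ^ 2 ∂ν := by
    intro t
    have h0 : 0 ≤ ∫ z, (t * F z + G z) ^ 2 ∂ν := integral_nonneg fun z => sq_nonneg _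
    have hrw : ∫ z, (t * F z + G z) ^ 2 ∂ν
        = ∫ z, (t ^ 2 * F z ^ 2 + (2 * t) * (F z * G z)) + G z ^ 2 ∂ν := by
      apply integral_congr_ae
      filter_upwards with z; ring
    have h1 : Integrable (fun z => t ^ 2 * F z ^ 2 + (2 * t) * (F z * G z)) ν :=
      (hF2.const_mul _).add (hFG.const_mul _)
    rw [hrw, integral_add h1 hG2, integral_add (hF2.const_mul _) (hFG.const_mul _),
      integral_const_mul, integral_const_mul] at h0
    nlinarith [h0]
  have hd := discrim_le_zero key
  rw [discrim] at hd
  nlinarith [hd]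

lemma comb_int {Z : Type*} [MeasurableSpace Z] {ν : Measure Z} (f1 f2 f3 f4 : Z → ℝ)
    (c1 c2 c3 c4 : ℝ) (h1 : Integrable f1 ν) (h2 : Integrable f2 ν) (h3 : Integrable f3 ν)
    (h4 : Integrable f4 ν) :
    Integrable (fun z => c1 * f1 z + c2 * f2 z + c3 * f3 z + c4 * f4 z) ν ∧
    ∫ z, (c1 * f1 z + c2 * f2 z + c3 * f3 z + c4 * f4 z) ∂ν
      = c1 * (∫ z, f1 z ∂ν) + c2 * (∫ z, f2 z ∂ν) + c3 * (∫ z, f3 z ∂ν)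
        + c4 * (∫ z, f4 z ∂ν) := by
  have i1 : Integrable (fun z => c1 * f1 z) ν := h1.const_mul _
  have i2 : Integrable (fun z => c2 * f2 z) ν := h2.const_mul _
  have i3 : Integrable (fun z => c3 * f3 z) ν := h3.const_mul _
  have i4 : Integrable (fun z => c4 * f4 z) ν := h4.const_mul _
  have i12 : Integrable (fun z => c1 * f1 z + c2 * f2 z) ν := i1.add i2
  have i123 : Integrable (fun z => c1 * f1 z + c2 * f2 z + c3 * f3 z) ν := i12.add i3
  refine ⟨i123.add i4, ?_⟩
  rw [integral_add i123 i4, integral_add i12 i3, integral_add i1 i2,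
    integral_const_mul, integral_const_mul, integral_const_mul, integral_const_mul]

lemma gram_ineq {Z : Type*} [MeasurableSpace Z] (ν : Measure Z) [SigmaFinite ν]
    (w : ℝ → Z → ℝ)
    (hint : ∀ p q : ℝ, Integrable (fun z => w p z * w q z) ν)
    (L : ℝ → ℝ → ℝ) (hL : ∀ p q, L p q = ∫ z, w p z * w q z ∂ν)
    (r s u v : ℝ) :
    ((L r r * L s s - L r s ^ 2) * (L s s * L u u - L s u ^ 2)
        - (L s s * L r u - L s u * L r s) ^ 2) *
      ((L r r * L s s - L r s ^ 2) * (L s s * L v v - L s v ^ 2)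
        - (L s s * L r v - L s v * L r s) ^ 2) ≥
    ((L r r * L s s - L r s ^ 2) * (L s s * L u v - L s u * L s v)
        - (L s s * L r u - L s u * L r s) * (L s s * L r v - L s v * L r s)) ^ 2 := by
  have hLsymm : ∀ p q, L p q = L q p := by
    intro p q; rw [hL, hL]
    exact integral_congr_ae (Filter.Eventually.of_forall fun z => mul_comm _ _)
  have hPint : ∀ p q p' q' : ℝ,
      Integrable (fun z : Z × Z => (w p z.1 * w q z.2) * (w p' z.1 * w q' z.2)) (ν.prod ν) := by
    intro p q p' q'
    have := (hint p p').mul_prod (hint q q')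
    apply this.congr
    filter_upwards with z
    ring
  have hPeq : ∀ p q p' q' : ℝ,
      ∫ z : Z × Z, (w p z.1 * w q z.2) * (w p' z.1 * w q' z.2) ∂(ν.prod ν)
        = L p p' * L q q' := by
    intro p q p' q'
    have h2 := integral_prod_mul (μ := ν) (ν := ν)
      (fun a => w p a * w p' a) (fun b => w q b * w q' b)
    have h1 : ∫ z : Z × Z, (w p z.1 * w q z.2) * (w p' z.1 * w q' z.2) ∂(ν.prod ν)
        = ∫ z : Z × Z, (fun a => w p a * w p' a) z.1 * (fun b => w q b * w q' b) z.2
          ∂(ν.prod ν) := by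
      apply integral_congr_ae; filter_upwards with z; ring
    rw [h1, h2, ← hL, ← hL]
  -- wedge products
  have hW : ∀ (x y x' y' : ℝ),
      Integrable (fun z : Z × Z => (w x z.1 * w y z.2 - w y z.1 * w x z.2)
          * (w x' z.1 * w y' z.2 - w y' z.1 * w x' z.2)) (ν.prod ν) ∧
      ∫ z : Z × Z, (w x z.1 * w y z.2 - w y z.1 * w x z.2)
          * (w x' z.1 * w y' z.2 - w y' z.1 * w x' z.2) ∂(ν.prod ν)
        = 2 * (L x x' * L y y' - L x y' * L y x') := by
    intro x y x' y'
    obtain ⟨hi, he⟩ := comb_int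
      (fun z : Z × Z => (w x z.1 * w y z.2) * (w x' z.1 * w y' z.2))
      (fun z : Z × Z => (w x z.1 * w y z.2) * (w y' z.1 * w x' z.2))
      (fun z : Z × Z => (w y z.1 * w x z.2) * (w x' z.1 * w y' z.2))
      (fun z : Z × Z => (w y z.1 * w x z.2) * (w y' z.1 * w x' z.2))
      1 (-1) (-1) 1 (hPint x y x' y') (hPint x y y' x') (hPint y x x' y') (hPint y x y' x')
    have hfun : ∀ z : Z × Z, (w x z.1 * w y z.2 - w y z.1 * w x z.2)
          * (w x' z.1 * w y' z.2 - w y' z.1 * w x' z.2)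
        = 1 * ((w x z.1 * w y z.2) * (w x' z.1 * w y' z.2))
          + (-1) * ((w x z.1 * w y z.2) * (w y' z.1 * w x' z.2))
          + (-1) * ((w y z.1 * w x z.2) * (w x' z.1 * w y' z.2))
          + 1 * ((w y z.1 * w x z.2) * (w y' z.1 * w x' z.2)) := by
      intro z; ring
    constructor
    · exact hi.congr (Filter.Eventually.of_forall fun z => (hfun z).symm)
    · rw [integral_congr_ae (Filter.Eventually.of_forall hfun), he,
        hPeq, hPeq, hPeq, hPeq]
      ring
  obtain ⟨haa, vaa⟩ := hW s r s r
  obtain ⟨hab, vab⟩ := hW s r s u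
  obtain ⟨hac, vac⟩ := hW s r s v
  obtain ⟨hbb, vbb⟩ := hW s u s u
  obtain ⟨hbc, vbc⟩ := hW s u s v
  obtain ⟨hcc, vcc⟩ := hW s v s v
  set α := L r r * L s s - L r s ^ 2 with hαd
  set β := L s s * L u u - L s u ^ 2 with hβd
  set γ := L s s * L v v - L s v ^ 2 with hγd
  set δ := L s s * L u v - L s u * L s v with hδd
  set e := L s s * L r u - L s u * L r s with hed
  set f := L s s * L r v - L s v * L r s with hfd
  have hsym_rs := hLsymm r s
  have hsym_us := hLsymm u s
  have hsym_vs := hLsymm v s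
  have vaa' : ∫ z : Z × Z, (w s z.1 * w r z.2 - w r z.1 * w s z.2) * (w s z.1 * w r z.2 - w r z.1 * w s z.2) ∂(ν.prod ν) = 2 * α := by
    rw [vaa, hαd, hsym_rs]; ring
  have vab' : ∫ z : Z × Z, (w s z.1 * w r z.2 - w r z.1 * w s z.2) * (w s z.1 * w u z.2 - w u z.1 * w s z.2) ∂(ν.prod ν) = 2 * e := by
    rw [vab, hed]
  have vac' : ∫ z : Z × Z, (w s z.1 * w r z.2 - w r z.1 * w s z.2) * (w s z.1 * w v z.2 - w v z.1 * w s z.2) ∂(ν.prod ν) = 2 * f := by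
    rw [vac, hfd]
  have vbb' : ∫ z : Z × Z, (w s z.1 * w u z.2 - w u z.1 * w s z.2) * (w s z.1 * w u z.2 - w u z.1 * w s z.2) ∂(ν.prod ν) = 2 * β := by
    rw [vbb, hβd, hsym_us]; ring
  have vcc' : ∫ z : Z × Z, (w s z.1 * w v z.2 - w v z.1 * w s z.2) * (w s z.1 * w v z.2 - w v z.1 * w s z.2) ∂(ν.prod ν) = 2 * γ := by
    rw [vcc, hγd, hsym_vs]; ring
  have vbc' : ∫ z : Z × Z, (w s z.1 * w u z.2 - w u z.1 * w s z.2) * (w s z.1 * w v z.2 - w v z.1 * w s z.2) ∂(ν.prod ν) = 2 * δ := by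
    rw [vbc, hδd, hsym_us]; ring
  have hα : 0 ≤ α := by
    have h0 : 0 ≤ ∫ z : Z × Z, (w s z.1 * w r z.2 - w r z.1 * w s z.2) * (w s z.1 * w r z.2 - w r z.1 * w s z.2) ∂(ν.prod ν) :=
      integral_nonneg fun z => mul_self_nonneg _
    rw [vaa'] at h0; linarith
  -- F and G
  obtain ⟨iF2, vF2⟩ := comb_int (fun z : Z × Z => (w s z.1 * w u z.2 - w u z.1 * w s z.2) * (w s z.1 * w u z.2 - w u z.1 * w s z.2)) (fun z : Z × Z => (w s z.1 * w r z.2 - w r z.1 * w s z.2) * (w s z.1 * w u z.2 - w u z.1 * w s z.2)) (fun z : Z × Z => (w s z.1 * w r z.2 - w r z.1 * w s z.2) * (w s z.1 * w r z.2 - w r z.1 * w s z.2)) (fun z : Z × Z => (w s z.1 * w r z.2 - w r z.1 * w s z.2) * (w s z.1 * w r z.2 - w r z.1 * w s z.2))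
    (α ^ 2) (-(2 * α * e)) (e ^ 2) 0 hbb hab haa haa
  obtain ⟨iG2, vG2⟩ := comb_int (fun z : Z × Z => (w s z.1 * w v z.2 - w v z.1 * w s z.2) * (w s z.1 * w v z.2 - w v z.1 * w s z.2)) (fun z : Z × Z => (w s z.1 * w r z.2 - w r z.1 * w s z.2) * (w s z.1 * w v z.2 - w v z.1 * w s z.2)) (fun z : Z × Z => (w s z.1 * w r z.2 - w r z.1 * w s z.2) * (w s z.1 * w r z.2 - w r z.1 * w s z.2)) (fun z : Z × Z => (w s z.1 * w r z.2 - w r z.1 * w s z.2) * (w s z.1 * w r z.2 - w r z.1 * w s z.2))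
    (α ^ 2) (-(2 * α * f)) (f ^ 2) 0 hcc hac haa haa
  obtain ⟨iFG, vFG⟩ := comb_int (fun z : Z × Z => (w s z.1 * w u z.2 - w u z.1 * w s z.2) * (w s z.1 * w v z.2 - w v z.1 * w s z.2)) (fun z : Z × Z => (w s z.1 * w r z.2 - w r z.1 * w s z.2) * (w s z.1 * w u z.2 - w u z.1 * w s z.2)) (fun z : Z × Z => (w s z.1 * w r z.2 - w r z.1 * w s z.2) * (w s z.1 * w v z.2 - w v z.1 * w s z.2)) (fun z : Z × Z => (w s z.1 * w r z.2 - w r z.1 * w s z.2) * (w s z.1 * w r z.2 - w r z.1 * w s z.2))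
    (α ^ 2) (-(α * f)) (-(e * α)) (e * f) hbc hab hac haa
  have hFfun : ∀ z : Z × Z, (α * (w s z.1 * w u z.2 - w u z.1 * w s z.2) - e * (w s z.1 * w r z.2 - w r z.1 * w s z.2)) ^ 2
      = α ^ 2 * ((w s z.1 * w u z.2 - w u z.1 * w s z.2) * (w s z.1 * w u z.2 - w u z.1 * w s z.2)) + (-(2 * α * e)) * ((w s z.1 * w r z.2 - w r z.1 * w s z.2) * (w s z.1 * w u z.2 - w u z.1 * w s z.2)) + e ^ 2 * ((w s z.1 * w r z.2 - w r z.1 * w s z.2) * (w s z.1 * w r z.2 - w r z.1 * w s z.2))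
        + 0 * ((w s z.1 * w r z.2 - w r z.1 * w s z.2) * (w s z.1 * w r z.2 - w r z.1 * w s z.2)) := by intro z; ring
  have hGfun : ∀ z : Z × Z, (α * (w s z.1 * w v z.2 - w v z.1 * w s z.2) - f * (w s z.1 * w r z.2 - w r z.1 * w s z.2)) ^ 2
      = α ^ 2 * ((w s z.1 * w v z.2 - w v z.1 * w s z.2) * (w s z.1 * w v z.2 - w v z.1 * w s z.2)) + (-(2 * α * f)) * ((w s z.1 * w r z.2 - w r z.1 * w s z.2) * (w s z.1 * w v z.2 - w v z.1 * w s z.2)) + f ^ 2 * ((w s z.1 * w r z.2 - w r z.1 * w s z.2) * (w s z.1 * w r z.2 - w r z.1 * w s z.2))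
        + 0 * ((w s z.1 * w r z.2 - w r z.1 * w s z.2) * (w s z.1 * w r z.2 - w r z.1 * w s z.2)) := by intro z; ring
  have hFGfun : ∀ z : Z × Z, (α * (w s z.1 * w u z.2 - w u z.1 * w s z.2) - e * (w s z.1 * w r z.2 - w r z.1 * w s z.2)) * (α * (w s z.1 * w v z.2 - w v z.1 * w s z.2) - f * (w s z.1 * w r z.2 - w r z.1 * w s z.2))
      = α ^ 2 * ((w s z.1 * w u z.2 - w u z.1 * w s z.2) * (w s z.1 * w v z.2 - w v z.1 * w s z.2)) + (-(α * f)) * ((w s z.1 * w r z.2 - w r z.1 * w s z.2) * (w s z.1 * w u z.2 - w u z.1 * w s z.2)) + (-(e * α)) * ((w s z.1 * w r z.2 - w r z.1 * w s z.2) * (w s z.1 * w v z.2 - w v z.1 * w s z.2))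
        + (e * f) * ((w s z.1 * w r z.2 - w r z.1 * w s z.2) * (w s z.1 * w r z.2 - w r z.1 * w s z.2)) := by intro z; ring
  have cs := integral_cs (ν.prod ν)
    (fun z : Z × Z => α * (w s z.1 * w u z.2 - w u z.1 * w s z.2) - e * (w s z.1 * w r z.2 - w r z.1 * w s z.2)) (fun z : Z × Z => α * (w s z.1 * w v z.2 - w v z.1 * w s z.2) - f * (w s z.1 * w r z.2 - w r z.1 * w s z.2))
    (iF2.congr (Filter.Eventually.of_forall fun z => (hFfun z).symm))
    (iG2.congr (Filter.Eventually.of_forall fun z => (hGfun z).symm))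
    (iFG.congr (Filter.Eventually.of_forall fun z => (hFGfun z).symm))
  rw [integral_congr_ae (Filter.Eventually.of_forall hFfun),
    integral_congr_ae (Filter.Eventually.of_forall hGfun),
    integral_congr_ae (Filter.Eventually.of_forall hFGfun), vF2, vG2, vFG,
    vaa', vab', vac', vbb', vcc', vbc'] at cs
  have l1 : (α ^ 2 * (2 * δ) + -(α * f) * (2 * e) + -(e * α) * (2 * f) + e * f * (2 * α)) ^ 2
      = 4 * α ^ 2 * (α * δ - e * f) ^ 2 := by ring
  have l2 : (α ^ 2 * (2 * β) + -(2 * α * e) * (2 * e) + e ^ 2 * (2 * α) + 0 * (2 * α))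
        * (α ^ 2 * (2 * γ) + -(2 * α * f) * (2 * f) + f ^ 2 * (2 * α) + 0 * (2 * α))
      = 4 * α ^ 2 * ((α * β - e ^ 2) * (α * γ - f ^ 2)) := by ring
  rw [l1, l2] at cs
  clear vF2 vG2 vFG iF2 iG2 iFG hFfun hGfun hFGfun haa hab hac hbb hbc hcc
    vaa vab vac vbb vbc vcc vaa' vab' vac' vbb' vcc' vbc' hW hPint hPeq hint hL hLsymm
  rcases hα.eq_or_lt with h0 | hpos
  · have hz : α = 0 := h0.symm
    rw [ge_iff_le, hz]
    have : (0 * β - e ^ 2) * (0 * γ - f ^ 2) = (0 * δ - e * f) ^ 2 := by ring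
    linarith [this]
  · have h4 : (0:ℝ) < 4 * α ^ 2 := by positivity
    exact le_of_mul_le_mul_left cs h4


noncomputable def Fc (c x m : ℝ) : ℝ :=
  if c = 0 then x / m - 1 + (Real.log m - Real.log x)
  else if c = 1 then x * Real.log x - x * Real.log m - x + m
  else (x ^ c - m ^ c - c * m ^ (c - 1) * (x - m)) / (c * (c - 1))

lemma Fc_zero (x m : ℝ) : Fc 0 x m = x / m - 1 + (Real.log m - Real.log x) := by
  norm_num [Fc]

lemma Fc_one (x m : ℝ) : Fc 1 x m = x * Real.log x - x * Real.log m - x + m := by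
  norm_num [Fc]

lemma Fc_other {c : ℝ} (hc0 : c ≠ 0) (hc1 : c ≠ 1) (x m : ℝ) :
    Fc c x m = (x ^ c - m ^ c - c * m ^ (c - 1) * (x - m)) / (c * (c - 1)) := by
  rw [Fc, if_neg hc0, if_neg hc1]

lemma hXint' {Ω : Type*} [MeasurableSpace Ω] {μ : Measure Ω} {X : Ω → ℝ}
    (hmom : ∀ s : ℝ, Integrable (fun ω => X ω ^ s) μ) : Integrable X μ :=
  (hmom 1).congr (Filter.Eventually.of_forall fun ω => Real.rpow_one (X ω))

lemma mean_pos {Ω : Type*} [MeasurableSpace Ω] {μ : Measure Ω} [IsProbabilityMeasure μ]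
    {X : Ω → ℝ} (hpos : ∀ᵐ ω ∂μ, 0 < X ω)
    (hmom : ∀ s : ℝ, Integrable (fun ω => X ω ^ s) μ) : 0 < ∫ ω, X ω ∂μ := by
  have hXi : Integrable X μ := hXint' hmom
  have h0 : 0 ≤ ∫ ω, X ω ∂μ := integral_nonneg_of_ae (hpos.mono fun ω h => h.le)
  rcases h0.eq_or_lt with h | h
  · exfalso
    have hz : X =ᵐ[μ] 0 :=
      (integral_eq_zero_iff_of_nonneg_ae (hpos.mono fun ω h => h.le) hXi).mp h.symm
    have hfalse : ∀ᵐ ω ∂μ, False := by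
      filter_upwards [hpos, hz] with ω h1 h2
      simp only [Pi.zero_apply] at h2
      rw [h2] at h1; exact lt_irrefl 0 h1
    rw [ae_iff] at hfalse
    simp only [not_false_iff, Set.setOf_true] at hfalse
    have hu : (μ Set.univ : ENNReal) = 1 := measure_univ
    rw [hfalse] at hu
    exact zero_ne_one hu
  · exact h

lemma Fc_int {Ω : Type*} [MeasurableSpace Ω] (μ : Measure Ω) [IsProbabilityMeasure μ]
    (X : Ω → ℝ) (hpos : ∀ᵐ ω ∂μ, 0 < X ω)
    (hmom : ∀ s : ℝ, Integrable (fun ω => X ω ^ s) μ)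
    (hlog : Integrable (fun ω => Real.log (X ω)) μ)
    (hxlog : Integrable (fun ω => X ω * Real.log (X ω)) μ) (c : ℝ) :
    Integrable (fun ω => Fc c (X ω) (∫ ω, X ω ∂μ)) μ ∧
    ∫ ω, Fc c (X ω) (∫ ω, X ω ∂μ) ∂μ = momentLambda μ X c := by
  have hXi : Integrable X μ := hXint' hmom
  have hm : 0 < ∫ ω, X ω ∂μ := mean_pos hpos hmom
  set m := ∫ ω, X ω ∂μ with hmdef
  rcases eq_or_ne c 0 with hc0 | hc0
  · subst hc0
    have hrepr : ∀ x : ℝ, Fc 0 x m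
        = m⁻¹ * x + ((-1) * Real.log x + (Real.log m - 1)) := by
      intro x; rw [Fc_zero, div_eq_mul_inv]; ring
    have i1 : Integrable (fun ω => m⁻¹ * X ω) μ := hXi.const_mul _
    have i2 : Integrable (fun ω => (-1 : ℝ) * Real.log (X ω)) μ := hlog.const_mul _
    have i3 : Integrable (fun _ : Ω => Real.log m - 1) μ := integrable_const _
    have i23 : Integrable (fun ω => (-1 : ℝ) * Real.log (X ω) + (Real.log m - 1)) μ :=
      i2.add i3
    constructor
    · exact (i1.add i23).congr (Filter.Eventually.of_forall fun ω => (hrepr (X ω)).symm)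
    · rw [integral_congr_ae (Filter.Eventually.of_forall fun ω => hrepr (X ω)),
        integral_add i1 i23, integral_add i2 i3, integral_const_mul, integral_const_mul,
        integral_const]
      simp only [measure_univ, probReal_univ, smul_eq_mul, one_mul]
      rw [momentLambda, if_pos rfl, ← hmdef, inv_mul_cancel₀ hm.ne']
      ring
  · rcases eq_or_ne c 1 with hc1 | hc1
    · subst hc1
      have hrepr : ∀ x : ℝ, Fc 1 x m
          = x * Real.log x + ((-(Real.log m) - 1) * x + m) := by
        intro x; rw [Fc_one]; ring
      have i1 : Integrable (fun ω => X ω * Real.log (X ω)) μ := hxlog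
      have i2 : Integrable (fun ω => (-(Real.log m) - 1) * X ω) μ := hXi.const_mul _
      have i3 : Integrable (fun _ : Ω => m) μ := integrable_const _
      have i23 : Integrable (fun ω => (-(Real.log m) - 1) * X ω + m) μ := i2.add i3
      constructor
      · exact (i1.add i23).congr (Filter.Eventually.of_forall fun ω => (hrepr (X ω)).symm)
      · rw [integral_congr_ae (Filter.Eventually.of_forall fun ω => hrepr (X ω)),
          integral_add i1 i23, integral_add i2 i3, integral_const_mul, integral_const]
        simp only [measure_univ, probReal_univ, smul_eq_mul, one_mul]
        rw [momentLambda, if_neg one_ne_zero, if_pos rfl, ← hmdef]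
        ring
    · have hcc : c * (c - 1) ≠ 0 := mul_ne_zero hc0 (sub_ne_zero.mpr hc1)
      have hrepr : ∀ x : ℝ, Fc c x m
          = (c * (c - 1))⁻¹ * x ^ c + ((-(c * m ^ (c - 1)) * (c * (c - 1))⁻¹) * x
            + (-(m ^ c) + c * m ^ (c - 1) * m) * (c * (c - 1))⁻¹) := by
        intro x; rw [Fc_other hc0 hc1, div_eq_mul_inv]; ring
      have i1 : Integrable (fun ω => (c * (c - 1))⁻¹ * X ω ^ c) μ := (hmom c).const_mul _
      have i2 : Integrable (fun ω => (-(c * m ^ (c - 1)) * (c * (c - 1))⁻¹) * X ω) μ :=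
        hXi.const_mul _
      have i3 : Integrable (fun _ : Ω => (-(m ^ c) + c * m ^ (c - 1) * m)
          * (c * (c - 1))⁻¹) μ := integrable_const _
      have i23 : Integrable (fun ω => (-(c * m ^ (c - 1)) * (c * (c - 1))⁻¹) * X ω
          + (-(m ^ c) + c * m ^ (c - 1) * m) * (c * (c - 1))⁻¹) μ := i2.add i3
      constructor
      · exact (i1.add i23).congr (Filter.Eventually.of_forall fun ω => (hrepr (X ω)).symm)
      · rw [integral_congr_ae (Filter.Eventually.of_forall fun ω => hrepr (X ω)),
          integral_add i1 i23, integral_add i2 i3, integral_const_mul, integral_const_mul,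
          integral_const]
        simp only [measure_univ, probReal_univ, smul_eq_mul, one_mul]
        rw [momentLambda, if_neg hc0, if_neg hc1, ← hmdef, div_eq_mul_inv]
        ring
lemma sliceFTC (c x m : ℝ) (hx : 0 < x) (hm : 0 < m) :
    IntervalIntegrable (fun θ => (m + θ * (x - m)) ^ (c - 2) * ((x - m) ^ 2 * (1 - θ)))
      volume 0 1 ∧
    ∫ θ in (0:ℝ)..1, (m + θ * (x - m)) ^ (c - 2) * ((x - m) ^ 2 * (1 - θ)) = Fc c x m := by
  have huIcc : Set.uIcc (0:ℝ) 1 = Set.Icc 0 1 := Set.uIcc_of_le zero_le_one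
  have hT : ∀ θ ∈ Set.uIcc (0:ℝ) 1, 0 < m + θ * (x - m) := by
    rw [huIcc]
    rintro θ ⟨h0, h1⟩
    rcases le_total m x with hmx | hmx
    · have : 0 ≤ θ * (x - m) := mul_nonneg h0 (by linarith)
      linarith
    · have : 0 ≤ (1 - θ) * (m - x) := mul_nonneg (by linarith) (by linarith)
      nlinarith
  have hTc : ContinuousOn (fun θ : ℝ => m + θ * (x - m)) (Set.uIcc 0 1) :=
    (continuous_const.add (continuous_id.mul continuous_const)).continuousOn
  have hcont : ContinuousOn
      (fun θ : ℝ => (m + θ * (x - m)) ^ (c - 2) * ((x - m) ^ 2 * (1 - θ)))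
      (Set.uIcc 0 1) := by
    apply ContinuousOn.mul
    · exact ContinuousOn.rpow_const hTc fun θ hθ => Or.inl (hT θ hθ).ne'
    · exact (continuous_const.mul (continuous_const.sub continuous_id)).continuousOn
  have hInt : IntervalIntegrable
      (fun θ : ℝ => (m + θ * (x - m)) ^ (c - 2) * ((x - m) ^ 2 * (1 - θ))) volume 0 1 :=
    hcont.intervalIntegrable
  refine ⟨hInt, ?_⟩
  have hTd : ∀ θ : ℝ, HasDerivAt (fun θ : ℝ => m + θ * (x - m)) (x - m) θ := fun θ =>
    (hasDerivAt_mul_const (x - m)).const_add m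
  rcases eq_or_ne c 0 with hc0 | hc0
  · subst hc0
    -- antiderivative: -(x / T) - log T
    have hderiv : ∀ θ ∈ Set.uIcc (0:ℝ) 1,
        HasDerivAt (fun θ : ℝ => -(x / (m + θ * (x - m))) - Real.log (m + θ * (x - m)))
          ((m + θ * (x - m)) ^ ((0:ℝ) - 2) * ((x - m) ^ 2 * (1 - θ))) θ := by
      intro θ hθ
      have hTθ := hT θ hθ
      have hinv : HasDerivAt (fun θ : ℝ => (m + θ * (x - m))⁻¹)
          (-(x - m) / (m + θ * (x - m)) ^ 2) θ := (hTd θ).inv hTθ.ne'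
      have hlog : HasDerivAt (fun θ : ℝ => Real.log (m + θ * (x - m)))
          ((m + θ * (x - m))⁻¹ * (x - m)) θ :=
        by have := (Real.hasDerivAt_log hTθ.ne').comp θ (hTd θ); exact this
      have h := ((hinv.const_mul x).neg.sub hlog)
      have heq : -(x * (-(x - m) / (m + θ * (x - m)) ^ 2)) - (m + θ * (x - m))⁻¹ * (x - m)
          = (m + θ * (x - m)) ^ ((0:ℝ) - 2) * ((x - m) ^ 2 * (1 - θ)) := by
        rw [show (0:ℝ) - 2 = -2 by norm_num, Real.rpow_neg hTθ.le,
          show (2:ℝ) = ((2:ℕ):ℝ) by norm_num, Real.rpow_natCast]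
        field_simp
        ring
      rw [heq] at h
      exact h.congr_of_eventuallyEq (Filter.Eventually.of_forall fun y => by simp [div_eq_mul_inv])
    rw [intervalIntegral.integral_eq_sub_of_hasDerivAt hderiv hInt]
    rw [Fc, if_pos rfl]
    rw [show m + 1 * (x - m) = x by ring, show m + 0 * (x - m) = m by ring]
    rw [div_self hx.ne']
    ring
  · rcases eq_or_ne c 1 with hc1 | hc1
    · subst hc1
      -- antiderivative: x * log T - T
      have hderiv : ∀ θ ∈ Set.uIcc (0:ℝ) 1,
          HasDerivAt (fun θ : ℝ => x * Real.log (m + θ * (x - m)) - (m + θ * (x - m)))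
            ((m + θ * (x - m)) ^ ((1:ℝ) - 2) * ((x - m) ^ 2 * (1 - θ))) θ := by
        intro θ hθ
        have hTθ := hT θ hθ
        have hlog : HasDerivAt (fun θ : ℝ => Real.log (m + θ * (x - m)))
            ((m + θ * (x - m))⁻¹ * (x - m)) θ :=
          by have := (Real.hasDerivAt_log hTθ.ne').comp θ (hTd θ); exact this
        have h := (hlog.const_mul x).sub (hTd θ)
        have heq : x * ((m + θ * (x - m))⁻¹ * (x - m)) - (x - m)
            = (m + θ * (x - m)) ^ ((1:ℝ) - 2) * ((x - m) ^ 2 * (1 - θ)) := by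
          rw [show (1:ℝ) - 2 = -1 by norm_num, Real.rpow_neg_one]
          field_simp
          ring
        rw [heq] at h
        exact h
      rw [intervalIntegral.integral_eq_sub_of_hasDerivAt hderiv hInt]
      rw [Fc, if_neg one_ne_zero, if_pos rfl]
      rw [show m + 1 * (x - m) = x by ring, show m + 0 * (x - m) = m by ring]
      ring
    · -- general case, antiderivative x * T^(c-1)/(c-1) - T^c/c
      have hc1' : c - 1 ≠ 0 := sub_ne_zero.mpr hc1
      have hderiv : ∀ θ ∈ Set.uIcc (0:ℝ) 1,
          HasDerivAt (fun θ : ℝ =>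
              x * (m + θ * (x - m)) ^ (c - 1) / (c - 1) - (m + θ * (x - m)) ^ c / c)
            ((m + θ * (x - m)) ^ (c - 2) * ((x - m) ^ 2 * (1 - θ))) θ := by
        intro θ hθ
        have hTθ := hT θ hθ
        have h1 : HasDerivAt (fun θ : ℝ => (m + θ * (x - m)) ^ (c - 1))
            ((c - 1) * (m + θ * (x - m)) ^ (c - 1 - 1) * (x - m)) θ :=
          by have := (Real.hasDerivAt_rpow_const (p := c - 1) (Or.inl hTθ.ne')).comp θ (hTd θ); exact this
        have h2 : HasDerivAt (fun θ : ℝ => (m + θ * (x - m)) ^ c)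
            (c * (m + θ * (x - m)) ^ (c - 1) * (x - m)) θ :=
          by have := (Real.hasDerivAt_rpow_const (p := c) (Or.inl hTθ.ne')).comp θ (hTd θ); exact this
        have h := ((h1.const_mul x).div_const (c - 1)).sub (h2.div_const c)
        have heq : x * ((c - 1) * (m + θ * (x - m)) ^ (c - 1 - 1) * (x - m)) / (c - 1)
              - c * (m + θ * (x - m)) ^ (c - 1) * (x - m) / c
            = (m + θ * (x - m)) ^ (c - 2) * ((x - m) ^ 2 * (1 - θ)) := by
          have e1 : c - 1 - 1 = c - 2 := by ring
          have e2 : (m + θ * (x - m)) ^ (c - 1)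
              = (m + θ * (x - m)) ^ (c - 2) * (m + θ * (x - m)) := by
            rw [← Real.rpow_add_one hTθ.ne' (c - 2)]
            congr 1
            ring
          rw [e1, e2]
          field_simp
          ring
        rw [heq] at h
        exact h
      rw [intervalIntegral.integral_eq_sub_of_hasDerivAt hderiv hInt]
      rw [Fc, if_neg hc0, if_neg hc1]
      rw [show m + 1 * (x - m) = x by ring, show m + 0 * (x - m) = m by ring]
      have ex : x ^ (c - 1) = x ^ c / x := by
        rw [Real.rpow_sub hx c 1, Real.rpow_one]
      have em : m ^ (c - 1) = m ^ c / m := by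
        rw [Real.rpow_sub hm c 1, Real.rpow_one]
      rw [ex, em]
      field_simp
      ring

lemma Tpos {x m θ : ℝ} (hx : 0 < x) (hm : 0 < m) (h0 : 0 ≤ θ) (h1 : θ ≤ 1) :
    0 < m + θ * (x - m) := by
  rcases le_total m x with hmx | hmx
  · have : 0 ≤ θ * (x - m) := mul_nonneg h0 (by linarith)
    linarith
  · have : 0 ≤ (1 - θ) * (m - x) := mul_nonneg (by linarith) (by linarith)
    nlinarith

lemma repr_lambda {Ω : Type*} [MeasurableSpace Ω] (μ : Measure Ω) [IsProbabilityMeasure μ]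
    (X : Ω → ℝ) (hX : Measurable X) (hpos : ∀ᵐ ω ∂μ, 0 < X ω)
    (hmom : ∀ s : ℝ, Integrable (fun ω => X ω ^ s) μ)
    (hlog : Integrable (fun ω => Real.log (X ω)) μ)
    (hxlog : Integrable (fun ω => X ω * Real.log (X ω)) μ) (c : ℝ) :
    Integrable (fun z : Ω × ℝ =>
        ((∫ ω, X ω ∂μ) + z.2 * (X z.1 - ∫ ω, X ω ∂μ)) ^ (c - 2)
          * ((X z.1 - ∫ ω, X ω ∂μ) ^ 2 * (1 - z.2)))
      (μ.prod (volume.restrict (Set.Icc 0 1))) ∧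
    ∫ z : Ω × ℝ, ((∫ ω, X ω ∂μ) + z.2 * (X z.1 - ∫ ω, X ω ∂μ)) ^ (c - 2)
          * ((X z.1 - ∫ ω, X ω ∂μ) ^ 2 * (1 - z.2))
        ∂(μ.prod (volume.restrict (Set.Icc 0 1))) = momentLambda μ X c := by
  have hm : 0 < ∫ ω, X ω ∂μ := mean_pos hpos hmom
  set m := ∫ ω, X ω ∂μ with hmdef
  set ρ := volume.restrict (Set.Icc (0:ℝ) 1) with hρdef
  set g : Ω × ℝ → ℝ := fun z =>
    (m + z.2 * (X z.1 - m)) ^ (c - 2) * ((X z.1 - m) ^ 2 * (1 - z.2)) with hgdef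
  have hgm : Measurable g := by
    apply Measurable.mul
    · fun_prop
    · fun_prop
  have hslice : ∀ ω : Ω, 0 < X ω →
      Integrable (fun θ => g (ω, θ)) ρ ∧ ∫ θ, g (ω, θ) ∂ρ = Fc c (X ω) m := by
    intro ω hx
    obtain ⟨hii, hval⟩ := sliceFTC c (X ω) m hx hm
    constructor
    · exact (intervalIntegrable_iff_integrableOn_Icc_of_le zero_le_one).mp hii
    · calc ∫ θ, g (ω, θ) ∂ρ
          = ∫ θ in Set.Ioc (0:ℝ) 1, g (ω, θ) := integral_Icc_eq_integral_Ioc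
        _ = ∫ θ in (0:ℝ)..1, g (ω, θ) := (intervalIntegral.integral_of_le zero_le_one).symm
        _ = Fc c (X ω) m := hval
  have hnorm : ∀ᵐ ω ∂μ, (∫ θ, ‖g (ω, θ)‖ ∂ρ) = Fc c (X ω) m := by
    filter_upwards [hpos] with ω hx
    have hae : ∀ᵐ θ ∂ρ, ‖g (ω, θ)‖ = g (ω, θ) := by
      rw [hρdef]
      filter_upwards [ae_restrict_mem measurableSet_Icc] with θ hθ
      rw [Real.norm_of_nonneg]
      exact mul_nonneg (Real.rpow_nonneg (Tpos hx hm hθ.1 hθ.2).le _)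
        (mul_nonneg (sq_nonneg _) (by linarith [hθ.2]))
    rw [integral_congr_ae hae]
    exact (hslice ω hx).2
  have hFci := Fc_int μ X hpos hmom hlog hxlog c
  have hint2 : Integrable (fun ω => ∫ θ, ‖g (ω, θ)‖ ∂ρ) μ :=
    hFci.1.congr (hnorm.mono fun ω h => h.symm)
  have hae1 : ∀ᵐ ω ∂μ, Integrable (fun θ => g (ω, θ)) ρ :=
    hpos.mono fun ω hx => (hslice ω hx).1
  have hint : Integrable g (μ.prod ρ) :=
    (integrable_prod_iff hgm.aestronglyMeasurable).mpr ⟨hae1, hint2⟩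
  refine ⟨hint, ?_⟩
  rw [integral_prod g hint]
  have hvals : ∀ᵐ ω ∂μ, (∫ θ, g (ω, θ) ∂ρ) = Fc c (X ω) m :=
    hpos.mono fun ω hx => (hslice ω hx).2
  rw [integral_congr_ae hvals]
  exact hFci.2
set_option maxHeartbeats 2000000 in
theorem theorem5 {Ω : Type*} [MeasurableSpace Ω] (μ : Measure Ω) [IsProbabilityMeasure μ]
    (X : Ω → ℝ) (hX : Measurable X) (hpos : ∀ᵐ ω ∂μ, 0 < X ω)
    (hmom : ∀ s : ℝ, Integrable (fun ω => X ω ^ s) μ)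
    (hlog : Integrable (fun ω => Real.log (X ω)) μ)
    (hxlog : Integrable (fun ω => X ω * Real.log (X ω)) μ)
    (r s u v : ℝ) :
    momentPhi μ X r s s u * momentPhi μ X r s s v ≥
      (momentXi μ X (r) (s) * (momentXi μ X (s) ((u + v) / 2) - momentXi μ X ((s + u) / 2) ((s + v) / 2)) -
        (momentXi μ X (s) ((r + u) / 2) - momentXi μ X ((r + s) / 2) ((s + u) / 2)) *
          (momentXi μ X (s) ((r + v) / 2) - momentXi μ X ((r + s) / 2) ((s + v) / 2))) ^ 2 := by
  classical
  have hm : 0 < ∫ ω, X ω ∂μ := mean_pos hpos hmom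
  set m := ∫ ω, X ω ∂μ with hmdef
  set ρ := volume.restrict (Set.Icc (0:ℝ) 1) with hρdef
  set w : ℝ → Ω × ℝ → ℝ := fun p z =>
    (m + z.2 * (X z.1 - m)) ^ (p / 2 - 1) * (|X z.1 - m| * Real.sqrt (1 - z.2)) with hwdef
  -- a.e. facts on the product measure
  have hfst : ∀ᵐ z ∂(μ.prod ρ), 0 < X z.1 := by
    rw [ae_iff]
    have hset : {z : Ω × ℝ | ¬ 0 < X z.1} = {ω : Ω | ¬ 0 < X ω} ×ˢ Set.univ := by
      ext z; simp
    rw [hset, Measure.prod_prod, ae_iff.mp hpos, zero_mul]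
  have hsnd : ∀ᵐ z ∂(μ.prod ρ), z.2 ∈ Set.Icc (0:ℝ) 1 := by
    rw [ae_iff]
    have hset : {z : Ω × ℝ | ¬ z.2 ∈ Set.Icc (0:ℝ) 1}
        = Set.univ ×ˢ {θ : ℝ | ¬ θ ∈ Set.Icc (0:ℝ) 1} := by
      ext z; simp
    rw [hset, Measure.prod_prod]
    have hc : {θ : ℝ | ¬ θ ∈ Set.Icc (0:ℝ) 1} = (Set.Icc (0:ℝ) 1)ᶜ := rfl
    have : ρ {θ : ℝ | ¬ θ ∈ Set.Icc (0:ℝ) 1} = 0 := by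
      rw [hρdef, hc, Measure.restrict_apply (measurableSet_Icc.compl)]
      simp [Set.compl_inter_self]
    rw [this, mul_zero]
  -- products of the w's agree a.e. with the integrand of repr_lambda
  have hwg : ∀ p q : ℝ, (fun z => w p z * w q z) =ᵐ[μ.prod ρ] fun z : Ω × ℝ =>
      (m + z.2 * (X z.1 - m)) ^ ((p + q) / 2 - 2) * ((X z.1 - m) ^ 2 * (1 - z.2)) := by
    intro p q
    filter_upwards [hfst, hsnd] with z hx hθ
    have hT : 0 < m + z.2 * (X z.1 - m) := Tpos hx hm hθ.1 hθ.2
    have e1 : (m + z.2 * (X z.1 - m)) ^ (p / 2 - 1) * (m + z.2 * (X z.1 - m)) ^ (q / 2 - 1)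
        = (m + z.2 * (X z.1 - m)) ^ ((p + q) / 2 - 2) := by
      rw [← Real.rpow_add hT]; congr 1; ring
    calc w p z * w q z
        = ((m + z.2 * (X z.1 - m)) ^ (p / 2 - 1) * (m + z.2 * (X z.1 - m)) ^ (q / 2 - 1))
          * (|X z.1 - m| ^ 2 * Real.sqrt (1 - z.2) ^ 2) := by rw [hwdef]; ring
      _ = (m + z.2 * (X z.1 - m)) ^ ((p + q) / 2 - 2) * ((X z.1 - m) ^ 2 * (1 - z.2)) := by
          rw [e1, sq_abs, Real.sq_sqrt (by linarith [hθ.2])]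
  have hrepr := fun c => repr_lambda μ X hX hpos hmom hlog hxlog c
  have hwint : ∀ p q : ℝ, Integrable (fun z => w p z * w q z) (μ.prod ρ) := by
    intro p q
    exact ((hrepr ((p + q) / 2)).1).congr (hwg p q).symm
  have hLval : ∀ p q : ℝ, momentLambda μ X ((p + q) / 2)
      = ∫ z, w p z * w q z ∂(μ.prod ρ) := by
    intro p q
    rw [integral_congr_ae (hwg p q)]
    have h2 := (hrepr ((p + q) / 2)).2
    rw [← hmdef, ← hρdef] at h2
    exact h2.symm
  have G := gram_ineq (μ.prod ρ) w hwint
    (fun p q => momentLambda μ X ((p + q) / 2)) hLval r s u v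
  simp only [momentPhi, momentXi, ge_iff_le]
  clear hwg hwint hLval hrepr hfst hsnd hm
  generalize momentLambda μ X = lam at G ⊢
  ring_nf at G ⊢
  linarith [G]
end

section
/- (Theorem 6) The relative divergence of type s is logarithmically convex in s: for all real numbers s and t, K_s(p‖q) · K_t(p‖q) ≥ (K_{(s+t)/2}(p‖q))². -/
open MeasureTheory intervalIntegral Real
open scoped ENNReal

/-! ### Auxiliary calculus lemmas -/

lemma intE (b : ℝ) (hb : b ≠ 0) : ∫ v in (0:ℝ)..1, Real.exp (v * b) = (Real.exp b - 1)/b := by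
  have h : ∀ v ∈ Set.uIcc (0:ℝ) 1, HasDerivAt (fun v => Real.exp (v*b) / b) (Real.exp (v*b)) v := by
    intro v _
    have : HasDerivAt (fun v : ℝ => v * b) b v := by simpa using (hasDerivAt_id v).mul_const b
    have := (this.exp).div_const b
    simpa [mul_div_assoc, mul_comm, mul_div_cancel_left₀ _ hb] using this
  have hint : IntervalIntegrable (fun v => Real.exp (v*b)) volume 0 1 :=
    (Real.continuous_exp.comp (continuous_id.mul continuous_const)).intervalIntegrable 0 1
  rw [integral_eq_sub_of_hasDerivAt h hint]
  simp [sub_div]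

lemma intE2 (b : ℝ) (hb : b ≠ 0) :
    ∫ u in (0:ℝ)..1, u * Real.exp (u * b) = ((b-1) * Real.exp b + 1)/b^2 := by
  have h : ∀ u ∈ Set.uIcc (0:ℝ) 1,
      HasDerivAt (fun u => (u*b - 1)/b^2 * Real.exp (u*b)) (u * Real.exp (u*b)) u := by
    intro u _
    have h1 : HasDerivAt (fun u : ℝ => u * b) b u := by simpa using (hasDerivAt_id u).mul_const b
    have h2 : HasDerivAt (fun u : ℝ => (u*b - 1)/b^2) (b/b^2) u := ((h1.sub_const 1).div_const _)
    have := h2.mul h1.exp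
    simp only [Pi.mul_def] at this
    refine this.congr_deriv ?_
    field_simp
    ring
  have hint : IntervalIntegrable (fun u => u * Real.exp (u*b)) volume 0 1 :=
    (continuous_id.mul (Real.continuous_exp.comp (continuous_id.mul continuous_const))).intervalIntegrable 0 1
  rw [integral_eq_sub_of_hasDerivAt h hint]
  field_simp
  simp only [mul_zero, Real.exp_zero]
  ring

/-! ### The double integral `II` and its closed form `CF` -/

noncomputable def II (L s : ℝ) : ℝ :=
  ∫ u in (0:ℝ)..1, ∫ v in (0:ℝ)..1, |u| * Real.exp ((u * (1 + v*(s-1))) * L)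

noncomputable def CF (L s : ℝ) : ℝ :=
  if s = 0 then Real.exp L - 1 - L
  else if s = 1 then L * Real.exp L - Real.exp L + 1
  else (Real.exp (s*L) - 1 - s*(Real.exp L - 1))/(s*(s-1))

lemma CF_zero (L : ℝ) : CF L 0 = Real.exp L - 1 - L := by simp [CF]
lemma CF_one (L : ℝ) : CF L 1 = L * Real.exp L - Real.exp L + 1 := by simp [CF]
lemma CF_ne (L s : ℝ) (h0 : s ≠ 0) (h1 : s ≠ 1) :
    CF L s = (Real.exp (s*L) - 1 - s*(Real.exp L - 1))/(s*(s-1)) := by simp [CF, h0, h1]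

lemma II_nonneg (L s : ℝ) : 0 ≤ II L s := by
  apply intervalIntegral.integral_nonneg (by norm_num)
  intro u _
  apply intervalIntegral.integral_nonneg (by norm_num)
  intro v _
  positivity

lemma inner_eq (L s : ℝ) (hs : s ≠ 1) (hL : L ≠ 0) (u : ℝ) (hu : u ∈ Set.Icc (0:ℝ) 1) :
    (∫ v in (0:ℝ)..1, |u| * Real.exp ((u * (1 + v*(s-1))) * L))
      = (Real.exp (u*(s*L)) - Real.exp (u*L))/((s-1)*L) := by
  have hrw : ∀ v : ℝ, |u| * Real.exp ((u * (1 + v*(s-1))) * L)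
      = |u| * Real.exp (u*L) * Real.exp (v * (u*(s-1)*L)) := by
    intro v
    rw [show (u * (1 + v*(s-1))) * L = u*L + v*(u*(s-1)*L) by ring, Real.exp_add]
    ring
  simp only [hrw]
  rw [intervalIntegral.integral_const_mul]
  rcases eq_or_lt_of_le hu.1 with h0 | h0
  · simp [← h0]
  · have hb : u*(s-1)*L ≠ 0 := by
      have : s - 1 ≠ 0 := sub_ne_zero.2 hs
      positivity
    rw [intE _ hb, abs_of_pos h0]
    have hx : Real.exp (u*(s*L)) = Real.exp (u*L) * Real.exp (u*(s-1)*L) := by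
      rw [← Real.exp_add]; ring_nf
    rw [hx]
    set A := Real.exp (u*L) with hA
    set B := Real.exp (u*(s-1)*L) with hB
    have h1 : s - 1 ≠ 0 := sub_ne_zero.2 hs
    field_simp

lemma cf_eq (L s : ℝ) : L^2 * II L s = CF L s := by
  rcases eq_or_ne L 0 with hL | hL
  · subst hL
    unfold CF
    split_ifs <;> simp
  rcases eq_or_ne s 1 with hs1 | hs1
  · subst hs1
    have : II L 1 = ((L-1) * Real.exp L + 1)/L^2 := by
      unfold II
      rw [← intE2 L hL]
      apply intervalIntegral.integral_congr
      intro u hu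
      rw [Set.uIcc_of_le (by norm_num : (0:ℝ) ≤ 1)] at hu
      have h2 : ∀ v : ℝ, u * (1 + v*(1-1)) * L = u * L := fun v => by ring
      simp [abs_of_nonneg hu.1, h2]
    rw [this]
    unfold CF
    rw [if_neg one_ne_zero, if_pos rfl]
    field_simp
  · have hII : II L s = ((∫ u in (0:ℝ)..1, Real.exp (u*(s*L)))
        - ∫ u in (0:ℝ)..1, Real.exp (u*L))/((s-1)*L) := by
      unfold II
      rw [← intervalIntegral.integral_sub
        (Continuous.intervalIntegrable (by fun_prop) 0 1 :
          IntervalIntegrable (fun u : ℝ => Real.exp (u*(s*L))) volume 0 1)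
        (Continuous.intervalIntegrable (by fun_prop) 0 1 :
          IntervalIntegrable (fun u : ℝ => Real.exp (u*L)) volume 0 1),
        ← intervalIntegral.integral_div]
      apply intervalIntegral.integral_congr
      intro u hu
      rw [Set.uIcc_of_le (by norm_num : (0:ℝ) ≤ 1)] at hu
      exact inner_eq L s hs1 hL u hu
    rcases eq_or_ne s 0 with hs0 | hs0
    · subst hs0
      have h2 : ∫ u in (0:ℝ)..1, Real.exp (u*((0:ℝ)*L)) = 1 := by
        norm_num
      rw [hII, h2, intE L hL]
      unfold CF
      rw [if_pos rfl]
      field_simp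
      ring
    · have hsL : s * L ≠ 0 := mul_ne_zero hs0 hL
      rw [hII, intE _ hsL, intE L hL]
      unfold CF
      rw [if_neg hs0, if_neg hs1]
      have h1 : s - 1 ≠ 0 := sub_ne_zero.2 hs1
      field_simp

/-! ### The statement's definition -/

/-- The relative divergence of type `s`, `K_s(p‖q)`. -/
noncomputable def relDiv {ι : Type*} (p q : ι → ℝ) (s : ℝ) : ℝ :=
  if s = 0 then ∑' i, q i * Real.log (q i / p i)
  else if s = 1 then ∑' i, p i * Real.log (p i / q i)
  else ((∑' i, p i ^ s * q i ^ (1 - s)) - 1) / (s * (s - 1))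

/-! ### Algebraic identities -/

lemma qexp_eq {ι : Type*} (p q : ι → ℝ) (hp : ∀ i, 0 < p i) (hq : ∀ i, 0 < q i) (s : ℝ) (i : ι) :
    q i * Real.exp (s * Real.log (p i / q i)) = p i ^ s * q i ^ (1-s) := by
  have hr : 0 < p i / q i := div_pos (hp i) (hq i)
  rw [mul_comm s, ← Real.rpow_def_of_pos hr, Real.div_rpow (hp i).le (hq i).le,
    Real.rpow_sub (hq i), Real.rpow_one]
  ring

lemma qexpL_eq {ι : Type*} (p q : ι → ℝ) (hp : ∀ i, 0 < p i) (hq : ∀ i, 0 < q i) (i : ι) :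
    q i * Real.exp (Real.log (p i / q i)) = p i := by
  rw [Real.exp_log (div_pos (hp i) (hq i)), mul_div_cancel₀ _ (ne_of_gt (hq i))]

lemma qCF_eq0 {ι : Type*} (p q : ι → ℝ) (hp : ∀ i, 0 < p i) (hq : ∀ i, 0 < q i) (i : ι) :
    q i * CF (Real.log (p i / q i)) 0 = p i - q i + q i * Real.log (q i / p i) := by
  have h1 : Real.log (q i / p i) = - Real.log (p i / q i) := by
    rw [Real.log_div (ne_of_gt (hq i)) (ne_of_gt (hp i)),
        Real.log_div (ne_of_gt (hp i)) (ne_of_gt (hq i))]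
    ring
  have h2 := qexpL_eq p q hp hq i
  rw [CF_zero, h1]
  linear_combination h2

lemma qCF_eq1 {ι : Type*} (p q : ι → ℝ) (hp : ∀ i, 0 < p i) (hq : ∀ i, 0 < q i) (i : ι) :
    q i * CF (Real.log (p i / q i)) 1 = p i * Real.log (p i / q i) - p i + q i := by
  have h2 := qexpL_eq p q hp hq i
  rw [CF_one]
  linear_combination (Real.log (p i / q i) - 1) * h2

lemma qCF_eqs {ι : Type*} (p q : ι → ℝ) (hp : ∀ i, 0 < p i) (hq : ∀ i, 0 < q i)
    (s : ℝ) (hs0 : s ≠ 0) (hs1 : s ≠ 1) (i : ι) :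
    q i * CF (Real.log (p i / q i)) s
      = (p i ^ s * q i ^ (1-s) - q i - s * (p i - q i)) / (s*(s-1)) := by
  have h2 := qexpL_eq p q hp hq i
  have h3 := qexp_eq p q hp hq s i
  rw [CF_ne _ _ hs0 hs1]
  linear_combination (h3 - s*h2)/(s*(s-1))

lemma Sq {ι : Type*} (p q : ι → ℝ)
    (hmom : ∀ s : ℝ, Summable (fun i => p i ^ s * q i ^ (1 - s))) : Summable q := by
  have := hmom 0
  simpa using this

lemma Sp {ι : Type*} (p q : ι → ℝ)
    (hmom : ∀ s : ℝ, Summable (fun i => p i ^ s * q i ^ (1 - s))) : Summable p := by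
  have := hmom 1
  simpa using this

lemma summable_qCF {ι : Type*} (p q : ι → ℝ) (hp : ∀ i, 0 < p i) (hq : ∀ i, 0 < q i)
    (hmom : ∀ s : ℝ, Summable (fun i => p i ^ s * q i ^ (1 - s)))
    (hpq : Summable (fun i => p i * Real.log (p i / q i)))
    (hqp : Summable (fun i => q i * Real.log (q i / p i)))
    (s : ℝ) : Summable (fun i => q i * CF (Real.log (p i / q i)) s) := by
  rcases eq_or_ne s 0 with h0 | h0
  · subst h0
    simp only [qCF_eq0 p q hp hq]
    exact (((Sp p q hmom).sub (Sq p q hmom)).add hqp)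
  rcases eq_or_ne s 1 with h1 | h1
  · subst h1
    simp only [qCF_eq1 p q hp hq]
    exact ((hpq.sub (Sp p q hmom)).add (Sq p q hmom))
  · simp only [qCF_eqs p q hp hq s h0 h1]
    exact (((hmom s).sub (Sq p q hmom)).sub
      (((Sp p q hmom).sub (Sq p q hmom)).mul_left s)).div_const _

lemma relDiv_eq {ι : Type*} (p q : ι → ℝ) (hp : ∀ i, 0 < p i) (hq : ∀ i, 0 < q i)
    (hp1 : ∑' i, p i = 1) (hq1 : ∑' i, q i = 1)
    (hmom : ∀ s : ℝ, Summable (fun i => p i ^ s * q i ^ (1 - s)))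
    (hpq : Summable (fun i => p i * Real.log (p i / q i)))
    (hqp : Summable (fun i => q i * Real.log (q i / p i)))
    (s : ℝ) :
    relDiv p q s = ∑' i, q i * CF (Real.log (p i / q i)) s := by
  rcases eq_or_ne s 0 with h0 | h0
  · subst h0
    have e1 : relDiv p q 0 = ∑' i, q i * Real.log (q i / p i) := by simp [relDiv]
    rw [e1, tsum_congr (fun i => qCF_eq0 p q hp hq i)]
    rw [Summable.tsum_add ((Sp p q hmom).sub (Sq p q hmom)) hqp,
        Summable.tsum_sub (Sp p q hmom) (Sq p q hmom), hp1, hq1]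
    ring
  rcases eq_or_ne s 1 with h1 | h1
  · subst h1
    have e1 : relDiv p q 1 = ∑' i, p i * Real.log (p i / q i) := by simp [relDiv]
    rw [e1, tsum_congr (fun i => qCF_eq1 p q hp hq i)]
    rw [Summable.tsum_add (hpq.sub (Sp p q hmom)) (Sq p q hmom),
        Summable.tsum_sub hpq (Sp p q hmom), hp1, hq1]
    ring
  · have e1 : relDiv p q s = ((∑' i, p i ^ s * q i ^ (1 - s)) - 1) / (s * (s - 1)) := by
      simp [relDiv, h0, h1]
    rw [e1, tsum_congr (fun i => qCF_eqs p q hp hq s h0 h1 i)]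
    rw [tsum_div_const,
        Summable.tsum_sub ((hmom s).sub (Sq p q hmom)) (((Sp p q hmom).sub (Sq p q hmom)).mul_left s),
        Summable.tsum_sub (hmom s) (Sq p q hmom), tsum_mul_left,
        Summable.tsum_sub (Sp p q hmom) (Sq p q hmom), hp1, hq1]
    ring_nf

/-! ### The reference measure and the integral representation -/

lemma icc_int (f : ℝ → ℝ) : ∫ x in Set.Icc (0:ℝ) 1, f x = ∫ x in (0:ℝ)..1, f x := by
  rw [intervalIntegral.integral_of_le zero_le_one, integral_Icc_eq_integral_Ioc]

noncomputable def nu : Measure (ℝ × ℝ) :=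
  (volume.restrict (Set.Icc (0:ℝ) 1)).prod (volume.restrict (Set.Icc (0:ℝ) 1))

instance : SFinite nu := by unfold nu; infer_instance

lemma nu_eq : nu = (volume : Measure (ℝ × ℝ)).restrict (Set.Icc (0:ℝ) 1 ×ˢ Set.Icc (0:ℝ) 1) := by
  rw [nu, Measure.volume_eq_prod, Measure.prod_restrict]

lemma setint_eq (L s c : ℝ) (hc : 0 ≤ c) :
    ∫⁻ x : ℝ × ℝ, ENNReal.ofReal (c * (|x.1| * Real.exp ((x.1 * (1 + x.2*(s-1))) * L))) ∂nu
      = ENNReal.ofReal (c * II L s) := by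
  set g : ℝ × ℝ → ℝ := fun x => c * (|x.1| * Real.exp ((x.1 * (1 + x.2*(s-1))) * L)) with hg
  have hgc : Continuous g := by fun_prop
  have hgi : Integrable g nu := by
    rw [nu_eq]
    exact hgc.continuousOn.integrableOn_compact (isCompact_Icc.prod isCompact_Icc)
  have hgn : 0 ≤ᶠ[ae nu] g := Filter.Eventually.of_forall fun x => by positivity
  rw [← ofReal_integral_eq_lintegral_ofReal hgi hgn]
  congr 1
  have hfi : Integrable (fun x : ℝ × ℝ => |x.1| * Real.exp ((x.1 * (1 + x.2*(s-1))) * L)) nu := by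
    rw [nu_eq]
    exact (Continuous.continuousOn (by fun_prop)).integrableOn_compact
      (isCompact_Icc.prod isCompact_Icc)
  calc ∫ x, g x ∂nu = c * ∫ x : ℝ × ℝ, |x.1| * Real.exp ((x.1 * (1 + x.2*(s-1))) * L) ∂nu := by
        exact integral_const_mul c _
    _ = c * II L s := by
        unfold nu
        rw [integral_prod _ hfi]
        simp only [icc_int]
        rfl

/-! ### The main theorem -/

theorem theorem6 {ι : Type*} [Countable ι] (p q : ι → ℝ)
    (hp : ∀ i, 0 < p i) (hq : ∀ i, 0 < q i)
    (hp1 : ∑' i, p i = 1) (hq1 : ∑' i, q i = 1)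
    (hmom : ∀ s : ℝ, Summable (fun i => p i ^ s * q i ^ (1 - s)))
    (hpq : Summable (fun i => p i * Real.log (p i / q i)))
    (hqp : Summable (fun i => q i * Real.log (q i / p i)))
    (s t : ℝ) :
    relDiv p q s * relDiv p q t ≥ (relDiv p q ((s + t) / 2)) ^ 2 := by
  classical
  letI : MeasurableSpace ι := ⊤
  haveI : MeasurableSingletonClass ι := ⟨fun _ => trivial⟩
  set L : ι → ℝ := fun i => Real.log (p i / q i) with hLdef
  set c : ι → ℝ := fun i => q i * (L i)^2 with hcdef
  have hc0 : ∀ i, 0 ≤ c i := fun i => mul_nonneg (hq i).le (sq_nonneg _)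
  set μ : Measure (ι × ℝ × ℝ) := (Measure.count : Measure ι).prod nu with hμdef
  set F : ℝ → ι × ℝ × ℝ → ℝ≥0∞ := fun w x =>
    ENNReal.ofReal (c x.1 * (|x.2.1| * Real.exp ((x.2.1 * (1 + x.2.2*(w-1))) * L x.1))) with hFdef
  -- measurability
  have hFmeas : ∀ w, Measurable (F w) := by
    intro w
    have h1 : Measurable fun z : (ℝ × ℝ) × ι => F w (z.2, z.1) := by
      apply measurable_from_prod_countable_left
      intro i
      show Measurable fun x : ℝ × ℝ => F w (i, x)
      simp only [hFdef]
      exact (ENNReal.continuous_ofReal.comp (by fun_prop)).measurable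
    exact h1.comp measurable_swap
  -- basic facts about the series
  have hsum : ∀ w, Summable (fun i => q i * CF (L i) w) :=
    fun w => summable_qCF p q hp hq hmom hpq hqp w
  have hCFnn : ∀ (w : ℝ) (i : ι), 0 ≤ q i * CF (L i) w := by
    intro w i
    have h2 : 0 ≤ CF (L i) w := by
      rw [← cf_eq]
      exact mul_nonneg (sq_nonneg _) (II_nonneg _ _)
    exact mul_nonneg (hq i).le h2
  have hrd : ∀ w, relDiv p q w = ∑' i, q i * CF (L i) w :=
    fun w => relDiv_eq p q hp hq hp1 hq1 hmom hpq hqp w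
  have hrdnn : ∀ w, 0 ≤ relDiv p q w := by
    intro w
    rw [hrd w]
    exact tsum_nonneg (hCFnn w)
  -- the integral representation
  have key : ∀ w, ∫⁻ x, F w x ∂μ = ENNReal.ofReal (relDiv p q w) := by
    intro w
    rw [hμdef, lintegral_prod _ (hFmeas w).aemeasurable, lintegral_count]
    have h1 : ∀ i, (∫⁻ y, F w (i, y) ∂nu) = ENNReal.ofReal (q i * CF (L i) w) := by
      intro i
      have h2 := setint_eq (L i) w (c i) (hc0 i)
      simp only [hFdef]
      rw [h2]
      congr 1
      rw [← cf_eq (L i) w, hcdef]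
      ring
    rw [tsum_congr h1, ← ENNReal.ofReal_tsum_of_nonneg (hCFnn w) (hsum w), ← hrd w]
  -- pointwise geometric mean identity
  set m : ℝ := (s + t) / 2 with hmdef
  have hpt : ∀ x, F m x = F s x ^ (1/2 : ℝ) * F t x ^ (1/2 : ℝ) := by
    intro x
    obtain ⟨i, u, v⟩ := x
    simp only [hFdef]
    set a := c i * (|u| * Real.exp ((u * (1 + v*(s-1))) * L i)) with ha
    set b := c i * (|u| * Real.exp ((u * (1 + v*(t-1))) * L i)) with hb
    set d := c i * (|u| * Real.exp ((u * (1 + v*(m-1))) * L i)) with hd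
    have nna : 0 ≤ a := mul_nonneg (hc0 i) (by positivity)
    have nnd : 0 ≤ d := mul_nonneg (hc0 i) (by positivity)
    have e1 : a * b = d ^ 2 := by
      have hexp : (u * (1 + v*(s-1))) * L i + (u * (1 + v*(t-1))) * L i
          = (u * (1 + v*(m-1))) * L i + (u * (1 + v*(m-1))) * L i := by
        rw [hmdef]; ring
      calc a * b = (c i * |u|)^2 * (Real.exp ((u * (1 + v*(s-1))) * L i)
              * Real.exp ((u * (1 + v*(t-1))) * L i)) := by rw [ha, hb]; ring
        _ = (c i * |u|)^2 * Real.exp ((u * (1 + v*(s-1))) * L i + (u * (1 + v*(t-1))) * L i) := by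
              rw [Real.exp_add]
        _ = (c i * |u|)^2 * Real.exp ((u * (1 + v*(m-1))) * L i + (u * (1 + v*(m-1))) * L i) := by
              rw [hexp]
        _ = d ^ 2 := by rw [Real.exp_add, hd]; ring
    have h2 : ENNReal.ofReal a * ENNReal.ofReal b = (ENNReal.ofReal d) ^ (2:ℕ) := by
      rw [← ENNReal.ofReal_mul nna, e1, ENNReal.ofReal_pow nnd]
    rw [← ENNReal.mul_rpow_of_nonneg _ _ (by norm_num : (0:ℝ) ≤ 1/2), h2,
        ← ENNReal.rpow_natCast, ← ENNReal.rpow_mul]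
    norm_num
  -- Hölder's inequality
  have hconj : (2:ℝ).HolderConjugate 2 := Real.HolderConjugate.two_two
  have holder := ENNReal.lintegral_mul_le_Lp_mul_Lq μ hconj
    ((hFmeas s).pow_const (1/2 : ℝ)).aemeasurable
    ((hFmeas t).pow_const (1/2 : ℝ)).aemeasurable
  have e2 : ∀ w : ℝ, (fun x => (F w x ^ (1/2:ℝ)) ^ (2:ℝ)) = F w := by
    intro w
    funext x
    rw [← ENNReal.rpow_mul]
    norm_num
  have e3 : ∀ x, ((fun x => F s x ^ (1/2:ℝ)) * fun x => F t x ^ (1/2:ℝ)) x = F m x :=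
    fun x => (hpt x).symm
  rw [lintegral_congr e3] at holder
  simp only [e2] at holder
  rw [key s, key t, key m] at holder
  -- back to the reals
  have hne : (ENNReal.ofReal (relDiv p q s)) ^ (1/(2:ℝ)) *
      (ENNReal.ofReal (relDiv p q t)) ^ (1/(2:ℝ)) ≠ ⊤ := by
    apply ENNReal.mul_ne_top <;>
      exact ENNReal.rpow_ne_top_of_nonneg (by norm_num) ENNReal.ofReal_ne_top
  have hfin := ENNReal.toReal_mono hne holder
  rw [ENNReal.toReal_ofReal (hrdnn m), ENNReal.toReal_mul,
      ← ENNReal.toReal_rpow, ← ENNReal.toReal_rpow,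
      ENNReal.toReal_ofReal (hrdnn s), ENNReal.toReal_ofReal (hrdnn t)] at hfin
  have hfin2 : relDiv p q m ≤ Real.sqrt (relDiv p q s) * Real.sqrt (relDiv p q t) := by
    rw [Real.sqrt_eq_rpow, Real.sqrt_eq_rpow]
    exact hfin
  have hsq := pow_le_pow_left₀ (hrdnn m) hfin2 2
  rw [mul_pow, Real.sq_sqrt (hrdnn s), Real.sq_sqrt (hrdnn t)] at hsq
  exact hsq
end

section
/- (Theorem 7, second inequality) For every real number s, K_s(p‖q) + K_s(q‖p) ≥ 4H², where H² = H²(p,q) denotes the squared Hellinger distance. -/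
open Real

private lemma my_convexOn_sinh : ConvexOn ℝ (Set.Ici (0:ℝ)) Real.sinh := by
  apply convexOn_of_deriv2_nonneg (convex_Ici 0) Real.continuous_sinh.continuousOn
    Real.differentiable_sinh.differentiableOn
  · rw [Real.deriv_sinh]
    exact Real.differentiable_cosh.differentiableOn
  · intro x hx
    rw [interior_Ici, Set.mem_Ioi] at hx
    simp only [Function.iterate_succ, Function.iterate_zero, Function.comp, id_eq,
      Real.deriv_sinh, Real.deriv_cosh]
    exact Real.sinh_nonneg_iff.2 hx.le

private lemma sinh_smul_le {t x : ℝ} (ht0 : 0 ≤ t) (ht1 : t ≤ 1) (hx : 0 ≤ x) :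
    Real.sinh (t * x) ≤ t * Real.sinh x := by
  have h := my_convexOn_sinh.2 (Set.mem_Ici.2 hx) (Set.mem_Ici.2 le_rfl)
    ht0 (by linarith : (0:ℝ) ≤ 1 - t) (by ring)
  simpa [Real.sinh_zero] using h

private lemma mul_sinh_le {t x : ℝ} (ht : 1 ≤ t) (hx : 0 ≤ x) :
    t * Real.sinh x ≤ Real.sinh (t * x) := by
  have ht0 : 0 < t := lt_of_lt_of_le one_pos ht
  have h := sinh_smul_le (t := t⁻¹) (x := t * x)
    (by positivity) (inv_le_one_of_one_le₀ ht) (by positivity)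
  rw [inv_mul_cancel_left₀ ht0.ne'] at h
  calc t * Real.sinh x ≤ t * (t⁻¹ * Real.sinh (t * x)) :=
        mul_le_mul_of_nonneg_left h ht0.le
    _ = Real.sinh (t * x) := by field_simp

private lemma cosh_sub_one (x : ℝ) : Real.cosh x - 1 = 2 * Real.sinh (x / 2) ^ 2 := by
  have h1 := Real.cosh_two_mul (x / 2)
  have h2 := Real.cosh_sq (x / 2)
  have : (2 : ℝ) * (x / 2) = x := by ring
  rw [this] at h1
  nlinarith

private lemma cosh_key_le {t : ℝ} (x : ℝ) (ht : |t| ≤ 1) :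
    Real.cosh (t * x) - 1 ≤ t ^ 2 * (Real.cosh x - 1) := by
  rw [cosh_sub_one, cosh_sub_one]
  have hs1 : Real.sinh (t * x / 2) ^ 2 = Real.sinh (|t| * (|x| / 2)) ^ 2 := by
    rw [← sq_abs, Real.abs_sinh]
    congr 2
    rw [abs_div, abs_mul, abs_two]
    ring
  have hs2 : Real.sinh (x / 2) ^ 2 = Real.sinh (|x| / 2) ^ 2 := by
    rw [← sq_abs, Real.abs_sinh, abs_div]
    norm_num
  rw [hs1, hs2]
  have h := sinh_smul_le (t := |t|) (x := |x| / 2) (abs_nonneg t) ht (by positivity)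
  have h0 : 0 ≤ Real.sinh (|t| * (|x| / 2)) := Real.sinh_nonneg_iff.2 (by positivity)
  nlinarith [sq_abs t, abs_nonneg t, Real.sinh_nonneg_iff.2 (by positivity : (0:ℝ) ≤ |x| / 2)]

private lemma cosh_key_ge {t : ℝ} (x : ℝ) (ht : 1 ≤ |t|) :
    t ^ 2 * (Real.cosh x - 1) ≤ Real.cosh (t * x) - 1 := by
  rw [cosh_sub_one, cosh_sub_one]
  have hs1 : Real.sinh (t * x / 2) ^ 2 = Real.sinh (|t| * (|x| / 2)) ^ 2 := by
    rw [← sq_abs, Real.abs_sinh]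
    congr 2
    rw [abs_div, abs_mul, abs_two]
    ring
  have hs2 : Real.sinh (x / 2) ^ 2 = Real.sinh (|x| / 2) ^ 2 := by
    rw [← sq_abs, Real.abs_sinh, abs_div]
    norm_num
  rw [hs1, hs2]
  have h := mul_sinh_le (t := |t|) (x := |x| / 2) ht (by positivity)
  have h0 : 0 ≤ Real.sinh (|x| / 2) := Real.sinh_nonneg_iff.2 (by positivity)
  have h2 : (|t| * Real.sinh (|x| / 2)) ^ 2 ≤ Real.sinh (|t| * (|x| / 2)) ^ 2 :=
    pow_le_pow_left₀ (by positivity) h 2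
  nlinarith [sq_abs t]

private lemma sinh_le_mul_cosh {u : ℝ} (hu : 0 ≤ u) : Real.sinh u ≤ u * Real.cosh u := by
  have key : MonotoneOn (fun v : ℝ => v * Real.cosh v - Real.sinh v) (Set.Ici 0) := by
    apply monotoneOn_of_deriv_nonneg (convex_Ici 0)
    · exact ((continuous_id.mul Real.continuous_cosh).sub Real.continuous_sinh).continuousOn
    · apply DifferentiableOn.sub
      · exact (differentiable_id.mul Real.differentiable_cosh).differentiableOn
      · exact Real.differentiable_sinh.differentiableOn
    · intro v hv
      rw [interior_Ici, Set.mem_Ioi] at hv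
      have hd : HasDerivAt (fun v : ℝ => v * Real.cosh v - Real.sinh v)
          (1 * Real.cosh v + v * Real.sinh v - Real.cosh v) v :=
        ((hasDerivAt_id v).mul (Real.hasDerivAt_cosh v)).sub (Real.hasDerivAt_sinh v)
      rw [hd.deriv]
      have := Real.sinh_nonneg_iff.2 hv.le
      nlinarith
  have h := key (Set.mem_Ici.2 le_rfl) (Set.mem_Ici.2 hu) hu
  simpa using h

private lemma two_cosh_sub_one_le (x : ℝ) : 2 * (Real.cosh x - 1) ≤ x * Real.sinh x := by
  have key : ∀ y : ℝ, 0 ≤ y → 2 * (Real.cosh y - 1) ≤ y * Real.sinh y := by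
    intro y hy
    rw [cosh_sub_one]
    have hs : Real.sinh y = 2 * Real.sinh (y / 2) * Real.cosh (y / 2) := by
      have := Real.sinh_two_mul (y / 2)
      rwa [show (2:ℝ) * (y/2) = y by ring] at this
    rw [hs]
    have h := sinh_le_mul_cosh (u := y / 2) (by positivity)
    have h0 : 0 ≤ Real.sinh (y / 2) := Real.sinh_nonneg_iff.2 (by positivity)
    nlinarith
  rcases le_total 0 x with hx | hx
  · exact key x hx
  · have h := key (-x) (by linarith)
    simpa [Real.cosh_neg, Real.sinh_neg] using h

private lemma my_sqrt_eq_exp {x : ℝ} (hx : 0 < x) : Real.sqrt x = Real.exp (Real.log x / 2) := by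
  have h : (Real.exp (Real.log x / 2)) ^ 2 = x := by
    rw [sq, ← Real.exp_add, show Real.log x / 2 + Real.log x / 2 = Real.log x by ring,
      Real.exp_log hx]
  calc Real.sqrt x = Real.sqrt ((Real.exp (Real.log x / 2)) ^ 2) := by rw [h]
    _ = Real.exp (Real.log x / 2) := Real.sqrt_sq (Real.exp_nonneg _)

private lemma pointwise_s {x y : ℝ} (hx : 0 < x) (hy : 0 < y) {s : ℝ}
    (hs0 : s ≠ 0) (hs1 : s ≠ 1) :
    4 * (Real.sqrt x - Real.sqrt y) ^ 2 ≤
      (x ^ s * y ^ (1 - s) + y ^ s * x ^ (1 - s) - x - y) / (s * (s - 1)) := by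
  set L := Real.log x with hL
  set M := Real.log y with hM
  set a := (L - M) / 2 with ha
  set t := 2 * s - 1 with htdef
  set E := Real.exp ((L + M) / 2) with hE
  have hEpos : 0 < E := Real.exp_pos _
  have h1 : x ^ s * y ^ (1 - s) = E * Real.exp (t * a) := by
    rw [Real.rpow_def_of_pos hx, Real.rpow_def_of_pos hy, ← Real.exp_add, hE, ← Real.exp_add]
    congr 1
    rw [ha, htdef]; ring
  have h2 : y ^ s * x ^ (1 - s) = E * Real.exp (-(t * a)) := by
    rw [Real.rpow_def_of_pos hy, Real.rpow_def_of_pos hx, ← Real.exp_add, hE, ← Real.exp_add]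
    congr 1
    rw [ha, htdef]; ring
  have h3 : x = E * Real.exp a := by
    rw [hE, ← Real.exp_add, show (L + M) / 2 + a = L by rw [ha]; ring, hL, Real.exp_log hx]
  have h4 : y = E * Real.exp (-a) := by
    rw [hE, ← Real.exp_add, show (L + M) / 2 + -a = M by rw [ha]; ring, hM, Real.exp_log hy]
  have h5 : (Real.sqrt x - Real.sqrt y) ^ 2 = x + y - 2 * E := by
    have hAB : Real.sqrt x * Real.sqrt y = E := by
      rw [my_sqrt_eq_exp hx, my_sqrt_eq_exp hy, ← Real.exp_add, hE]
      congr 1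
      rw [hL, hM]; ring
    rw [sub_sq, Real.sq_sqrt hx.le, Real.sq_sqrt hy.le, mul_assoc, hAB]
    ring
  have hxy : x + y = E * (2 * Real.cosh a) := by
    rw [h3, h4, Real.cosh_eq]; ring
  have hta : E * Real.exp (t * a) + E * Real.exp (-(t * a)) = E * (2 * Real.cosh (t * a)) := by
    rw [Real.cosh_eq]; ring
  rw [h5, h1, h2]
  rw [show E * Real.exp (t * a) + E * Real.exp (-(t * a)) - x - y
      = E * (2 * Real.cosh (t * a)) - (x + y) by rw [← hta]; ring, hxy]
  have hK : s * (s - 1) = (t ^ 2 - 1) / 4 := by rw [htdef]; ring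
  clear_value L M a t E
  have hKne : s * (s - 1) ≠ 0 := mul_ne_zero hs0 (sub_ne_zero.2 hs1)
  rcases hKne.lt_or_gt with hKneg | hKpos
  · rw [le_div_iff_of_neg hKneg]
    have ht2 : t ^ 2 < 1 := by nlinarith
    have htabs : |t| ≤ 1 := by nlinarith [sq_abs t, abs_nonneg t]
    have key := cosh_key_le (t := t) a htabs
    nlinarith [mul_le_mul_of_nonneg_left key hEpos.le]
  · rw [le_div_iff₀ hKpos]
    have ht2 : 1 < t ^ 2 := by nlinarith
    have htabs : 1 ≤ |t| := by nlinarith [sq_abs t, abs_nonneg t]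
    have key := cosh_key_ge (t := t) a htabs
    nlinarith [mul_le_mul_of_nonneg_left key hEpos.le]

private lemma pointwise_log {x y : ℝ} (hx : 0 < x) (hy : 0 < y) :
    4 * (Real.sqrt x - Real.sqrt y) ^ 2 ≤
      x * Real.log (x / y) + y * Real.log (y / x) := by
  set L := Real.log x with hL
  set M := Real.log y with hM
  set a := (L - M) / 2 with ha
  set E := Real.exp ((L + M) / 2) with hE
  have hEpos : 0 < E := Real.exp_pos _
  have h3 : x = E * Real.exp a := by
    rw [hE, ← Real.exp_add, show (L + M) / 2 + a = L by rw [ha]; ring, hL, Real.exp_log hx]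
  have h4 : y = E * Real.exp (-a) := by
    rw [hE, ← Real.exp_add, show (L + M) / 2 + -a = M by rw [ha]; ring, hM, Real.exp_log hy]
  have h5 : (Real.sqrt x - Real.sqrt y) ^ 2 = x + y - 2 * E := by
    have hAB : Real.sqrt x * Real.sqrt y = E := by
      rw [my_sqrt_eq_exp hx, my_sqrt_eq_exp hy, ← Real.exp_add, hE]
      congr 1
      rw [hL, hM]; ring
    rw [sub_sq, Real.sq_sqrt hx.le, Real.sq_sqrt hy.le, mul_assoc, hAB]
    ring
  have hlog1 : Real.log (x / y) = 2 * a := by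
    rw [Real.log_div hx.ne' hy.ne', ← hL, ← hM, ha]; ring
  have hlog2 : Real.log (y / x) = -(2 * a) := by
    rw [Real.log_div hy.ne' hx.ne', ← hL, ← hM, ha]; ring
  have hxy : x + y = E * (2 * Real.cosh a) := by
    rw [h3, h4, Real.cosh_eq]; ring
  have hrhs : x * Real.log (x / y) + y * Real.log (y / x) = E * (2 * a * (2 * Real.sinh a)) := by
    rw [hlog1, hlog2, h3, h4, Real.sinh_eq]; ring
  rw [h5, hrhs, hxy]
  clear_value L M a E
  nlinarith [mul_le_mul_of_nonneg_left (two_cosh_sub_one_le a) hEpos.le]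
/-- The squared Hellinger distance `H²(p,q)`. -/
noncomputable def hellingerSq {ι : Type*} (p q : ι → ℝ) : ℝ :=
  ∑' i, (Real.sqrt (p i) - Real.sqrt (q i)) ^ 2

private lemma relDiv_zero {ι : Type*} (p q : ι → ℝ) :
    relDiv p q 0 = ∑' i, q i * Real.log (q i / p i) := by simp [relDiv]

private lemma relDiv_one {ι : Type*} (p q : ι → ℝ) :
    relDiv p q 1 = ∑' i, p i * Real.log (p i / q i) := by simp [relDiv]

private lemma relDiv_ne {ι : Type*} (p q : ι → ℝ) {s : ℝ} (hs0 : s ≠ 0) (hs1 : s ≠ 1) :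
    relDiv p q s = ((∑' i, p i ^ s * q i ^ (1 - s)) - 1) / (s * (s - 1)) := by
  simp [relDiv, hs0, hs1]

theorem theorem7_second {ι : Type*} [Countable ι] (p q : ι → ℝ)
    (hp : ∀ i, 0 < p i) (hq : ∀ i, 0 < q i)
    (hp1 : ∑' i, p i = 1) (hq1 : ∑' i, q i = 1)
    (hmom : ∀ s : ℝ, Summable (fun i => p i ^ s * q i ^ (1 - s)))
    (hpq : Summable (fun i => p i * Real.log (p i / q i)))
    (hqp : Summable (fun i => q i * Real.log (q i / p i)))
    (s : ℝ) :
    relDiv p q s + relDiv q p s ≥ 4 * hellingerSq p q := by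
  have hsp : Summable p := by
    have h := hmom 1
    simpa using h
  have hsq : Summable q := by
    have h := hmom 0
    simpa using h
  have hsqrt : Summable (fun i => Real.sqrt (p i) * Real.sqrt (q i)) := by
    have h := hmom (1/2)
    rw [show ((1:ℝ) - 1/2) = 1/2 by norm_num] at h
    exact h.congr fun i => by simp [Real.sqrt_eq_rpow]
  have hH : Summable (fun i => (Real.sqrt (p i) - Real.sqrt (q i)) ^ 2) := by
    have heq : ∀ i, (Real.sqrt (p i) - Real.sqrt (q i)) ^ 2
        = p i + q i - 2 * (Real.sqrt (p i) * Real.sqrt (q i)) := by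
      intro i
      rw [sub_sq, Real.sq_sqrt (hp i).le, Real.sq_sqrt (hq i).le]
      ring
    exact ((hsp.add hsq).sub (hsqrt.mul_left 2)).congr fun i => (heq i).symm
  rw [ge_iff_le]
  have h4H : 4 * hellingerSq p q = ∑' i, 4 * (Real.sqrt (p i) - Real.sqrt (q i)) ^ 2 := by
    simp only [hellingerSq]
    rw [tsum_mul_left]
  rw [h4H]
  rcases eq_or_ne s 0 with rfl | hs0
  · rw [relDiv_zero, relDiv_zero, ← Summable.tsum_add hqp hpq]
    refine Summable.tsum_le_tsum (fun i => ?_) (hH.mul_left 4) (hqp.add hpq)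
    have h := pointwise_log (hq i) (hp i)
    calc 4 * (Real.sqrt (p i) - Real.sqrt (q i)) ^ 2
        = 4 * (Real.sqrt (q i) - Real.sqrt (p i)) ^ 2 := by ring
      _ ≤ q i * Real.log (q i / p i) + p i * Real.log (p i / q i) := h
  rcases eq_or_ne s 1 with rfl | hs1
  · rw [relDiv_one, relDiv_one, ← Summable.tsum_add hpq hqp]
    refine Summable.tsum_le_tsum (fun i => ?_) (hH.mul_left 4) (hpq.add hqp)
    exact pointwise_log (hp i) (hq i)
  · rw [relDiv_ne p q hs0 hs1, relDiv_ne q p hs0 hs1]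
    have hA := hmom s
    have hB : Summable (fun i => q i ^ s * p i ^ (1 - s)) := by
      have h := hmom (1 - s)
      rw [show (1:ℝ) - (1 - s) = s by ring] at h
      exact h.congr fun i => mul_comm _ _
    have hnum : Summable
        (fun i => p i ^ s * q i ^ (1 - s) + q i ^ s * p i ^ (1 - s) - (p i + q i)) :=
      (hA.add hB).sub (hsp.add hsq)
    have hG : Summable (fun i =>
        (p i ^ s * q i ^ (1 - s) + q i ^ s * p i ^ (1 - s) - (p i + q i)) / (s * (s - 1))) :=
      hnum.div_const _
    have htsum : ((∑' i, p i ^ s * q i ^ (1 - s)) - 1) / (s * (s - 1))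
          + ((∑' i, q i ^ s * p i ^ (1 - s)) - 1) / (s * (s - 1))
        = ∑' i, (p i ^ s * q i ^ (1 - s) + q i ^ s * p i ^ (1 - s) - (p i + q i))
            / (s * (s - 1)) := by
      rw [tsum_div_const, Summable.tsum_sub (hA.add hB) (hsp.add hsq), Summable.tsum_add hA hB,
        Summable.tsum_add hsp hsq, hp1, hq1]
      ring
    rw [htsum]
    refine Summable.tsum_le_tsum (fun i => ?_) (hH.mul_left 4) hG
    have h := pointwise_s (hp i) (hq i) hs0 hs1
    rw [sub_sub] at h
    exact h
end

section
/- (Theorem 8, second estimate) For all real numbers a and b, |P_a − P_b| ≤ (P_{a+b−1/2} · P_{a−b+1/2})^{1/2}, where P_a := K_a(p‖q) · K_a(q‖p) − 4H⁴. -/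
/-- `P_a := K_a(p‖q) · K_a(q‖p) - 4H⁴`. -/
noncomputable def symP {ι : Type*} (p q : ι → ℝ) (a : ℝ) : ℝ :=
  relDiv p q a * relDiv q p a - 4 * (hellingerSq p q) ^ 2

namespace Thm8Aux

open MeasureTheory Real
open scoped ENNReal NNReal

noncomputable def phiExp (c : ℝ) : ℝ := if c = 0 then 1 else (Real.exp c - 1) / c

lemma integral_exp_phi (c : ℝ) : ∫ u in (0:ℝ)..1, Real.exp (c * u) = phiExp c := by
  unfold phiExp
  split_ifs with h
  · simp [h]
  · rw [intervalIntegral.integral_comp_mul_left (fun x => Real.exp x) h]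
    simp [Real.exp_zero]
    ring

lemma phiExp_zero : phiExp 0 = 1 := by simp [phiExp]

lemma phiExp_ne {c : ℝ} (hc : c ≠ 0) : phiExp c = (Real.exp c - 1) / c := by
  simp [phiExp, hc]

lemma sinh_mul_sinh_eq (w U V : ℝ) :
    Real.sinh (w * U) * Real.sinh (w * V) =
      (Real.exp (w * (U + V)) + Real.exp (w * (-(U + V))) -
        Real.exp (w * (U - V)) - Real.exp (w * (-(U - V)))) / 4 := by
  rw [Real.sinh_eq, Real.sinh_eq,
    show w * (U + V) = w * U + w * V by ring,
    show w * (-(U + V)) = -(w * U) + -(w * V) by ring,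
    show w * (U - V) = w * U + -(w * V) by ring,
    show w * (-(U - V)) = -(w * U) + w * V by ring,
    Real.exp_add, Real.exp_add, Real.exp_add, Real.exp_add]
  ring

/-- Abstract Cauchy–Schwarz step: if `B` is the two-sided Laplace transform of a
finite positive measure, then `t ↦ B t * B (-t)` satisfies the key inequality. -/
lemma cs_measure (ν : Measure ℝ) [IsFiniteMeasure ν] (B : ℝ → ℝ)
    (hInt : ∀ t : ℝ, Integrable (fun ω => Real.exp (ω * t)) ν)
    (hB : ∀ t : ℝ, ∫ ω, Real.exp (ω * t) ∂ν = B t) (x y : ℝ) :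
    |B x * B (-x) - B y * B (-y)| ≤
      Real.sqrt ((B (x + y) * B (-(x + y)) - B 0 * B 0) *
        (B (x - y) * B (-(x - y)) - B 0 * B 0)) := by
  set m : Measure (ℝ × ℝ) := ν.prod ν with hm
  have hexp : ∀ c : ℝ, (fun z : ℝ × ℝ => Real.exp ((z.1 - z.2) * c)) =
      fun z : ℝ × ℝ => Real.exp (z.1 * c) * Real.exp (z.2 * (-c)) := by
    intro c; funext z; rw [← Real.exp_add]; congr 1; ring
  have hIntE : ∀ c : ℝ, Integrable (fun z : ℝ × ℝ => Real.exp ((z.1 - z.2) * c)) m := by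
    intro c; rw [hexp c]; exact (hInt c).mul_prod (hInt (-c))
  have hIE : ∀ c : ℝ, ∫ z : ℝ × ℝ, Real.exp ((z.1 - z.2) * c) ∂m = B c * B (-c) := by
    intro c
    rw [hexp c, hm, ← hB c, ← hB (-c)]
    exact MeasureTheory.integral_prod_mul (μ := ν) (ν := ν)
      (fun ω => Real.exp (ω * c)) (fun ω => Real.exp (ω * -c))
  have hIntSS : ∀ U V : ℝ,
      Integrable (fun z : ℝ × ℝ => Real.sinh ((z.1 - z.2) * U) * Real.sinh ((z.1 - z.2) * V)) m := by
    intro U V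
    have h := ((((hIntE (U + V)).add (hIntE (-(U + V)))).sub (hIntE (U - V))).sub
      (hIntE (-(U - V)))).div_const (4 : ℝ)
    exact h.congr (Filter.EventuallyEq.of_eq (funext fun z => (sinh_mul_sinh_eq _ _ _).symm))
  have hISS : ∀ U V : ℝ,
      ∫ z : ℝ × ℝ, Real.sinh ((z.1 - z.2) * U) * Real.sinh ((z.1 - z.2) * V) ∂m =
        (B (U + V) * B (-(U + V)) - B (U - V) * B (-(U - V))) / 2 := by
    intro U V
    have Ia : Integrable (fun z : ℝ × ℝ => Real.exp ((z.1 - z.2) * (U + V))) m := hIntE _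
    have Ib : Integrable (fun z : ℝ × ℝ => Real.exp ((z.1 - z.2) * (-(U + V)))) m := hIntE _
    have Ic : Integrable (fun z : ℝ × ℝ => Real.exp ((z.1 - z.2) * (U - V))) m := hIntE _
    have Id : Integrable (fun z : ℝ × ℝ => Real.exp ((z.1 - z.2) * (-(U - V)))) m := hIntE _
    have Iab : Integrable (fun z : ℝ × ℝ => Real.exp ((z.1 - z.2) * (U + V)) +
        Real.exp ((z.1 - z.2) * (-(U + V)))) m := Ia.add Ib
    have Iabc : Integrable (fun z : ℝ × ℝ => Real.exp ((z.1 - z.2) * (U + V)) +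
        Real.exp ((z.1 - z.2) * (-(U + V))) - Real.exp ((z.1 - z.2) * (U - V))) m := Iab.sub Ic
    simp only [sinh_mul_sinh_eq]
    rw [MeasureTheory.integral_div, MeasureTheory.integral_sub Iabc Id,
      MeasureTheory.integral_sub Iab Ic, MeasureTheory.integral_add Ia Ib,
      hIE, hIE, hIE, hIE]
    simp only [neg_neg]
    ring
  set X : ℝ := (x + y) / 2 with hX
  set Y : ℝ := (x - y) / 2 with hY
  set Sxx : ℝ := ∫ z : ℝ × ℝ, Real.sinh ((z.1 - z.2) * X) * Real.sinh ((z.1 - z.2) * X) ∂m with hSxx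
  set Syy : ℝ := ∫ z : ℝ × ℝ, Real.sinh ((z.1 - z.2) * Y) * Real.sinh ((z.1 - z.2) * Y) ∂m with hSyy
  set Sxy : ℝ := ∫ z : ℝ × ℝ, Real.sinh ((z.1 - z.2) * X) * Real.sinh ((z.1 - z.2) * Y) ∂m with hSxy
  have hSxxv : Sxx = (B (x + y) * B (-(x + y)) - B 0 * B 0) / 2 := by
    rw [hSxx, hISS X X, show X + X = x + y by rw [hX]; ring, show X - X = (0:ℝ) by ring, neg_zero]
  have hSyyv : Syy = (B (x - y) * B (-(x - y)) - B 0 * B 0) / 2 := by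
    rw [hSyy, hISS Y Y, show Y + Y = x - y by rw [hY]; ring, show Y - Y = (0:ℝ) by ring, neg_zero]
  have hSxyv : Sxy = (B x * B (-x) - B y * B (-y)) / 2 := by
    rw [hSxy, hISS X Y, show X + Y = x by rw [hX, hY]; ring, show X - Y = y by rw [hX, hY]; ring]
  have hSxx0 : 0 ≤ Sxx := by
    rw [hSxx]; exact MeasureTheory.integral_nonneg fun z => mul_self_nonneg _
  have hSyy0 : 0 ≤ Syy := by
    rw [hSyy]; exact MeasureTheory.integral_nonneg fun z => mul_self_nonneg _
  have hquad : ∀ θ : ℝ, 0 ≤ Sxx * (θ * θ) + (-(2 * Sxy)) * θ + Syy := by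
    intro θ
    have hexpand : ∫ z : ℝ × ℝ,
        (θ * Real.sinh ((z.1 - z.2) * X) - Real.sinh ((z.1 - z.2) * Y)) ^ 2 ∂m =
        Sxx * (θ * θ) + (-(2 * Sxy)) * θ + Syy := by
      have hptw : ∀ z : ℝ × ℝ,
          (θ * Real.sinh ((z.1 - z.2) * X) - Real.sinh ((z.1 - z.2) * Y)) ^ 2 =
          (θ * θ) * (Real.sinh ((z.1 - z.2) * X) * Real.sinh ((z.1 - z.2) * X)) +
          ((-(2 * θ)) * (Real.sinh ((z.1 - z.2) * X) * Real.sinh ((z.1 - z.2) * Y)) +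
            Real.sinh ((z.1 - z.2) * Y) * Real.sinh ((z.1 - z.2) * Y)) := by
        intro z; ring
      have I1 : Integrable (fun z : ℝ × ℝ => (θ * θ) *
          (Real.sinh ((z.1 - z.2) * X) * Real.sinh ((z.1 - z.2) * X))) m := (hIntSS X X).const_mul _
      have I2 : Integrable (fun z : ℝ × ℝ => (-(2 * θ)) *
          (Real.sinh ((z.1 - z.2) * X) * Real.sinh ((z.1 - z.2) * Y))) m := (hIntSS X Y).const_mul _
      have I3 : Integrable (fun z : ℝ × ℝ =>
          Real.sinh ((z.1 - z.2) * Y) * Real.sinh ((z.1 - z.2) * Y)) m := hIntSS Y Y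
      have I23 : Integrable (fun z : ℝ × ℝ => (-(2 * θ)) *
          (Real.sinh ((z.1 - z.2) * X) * Real.sinh ((z.1 - z.2) * Y)) +
          Real.sinh ((z.1 - z.2) * Y) * Real.sinh ((z.1 - z.2) * Y)) m := I2.add I3
      simp only [hptw]
      rw [MeasureTheory.integral_add I1 I23, MeasureTheory.integral_add I2 I3,
        MeasureTheory.integral_const_mul _ _, MeasureTheory.integral_const_mul _ _]
      rw [← hSxx, ← hSyy, ← hSxy]
      ring
    rw [← hexpand]
    exact MeasureTheory.integral_nonneg fun z => sq_nonneg _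
  have hd := discrim_le_zero hquad
  rw [discrim] at hd
  have hsq : (B x * B (-x) - B y * B (-y)) ^ 2 ≤
      (B (x + y) * B (-(x + y)) - B 0 * B 0) * (B (x - y) * B (-(x - y)) - B 0 * B 0) := by
    have h1 : B x * B (-x) - B y * B (-y) = 2 * Sxy := by rw [hSxyv]; ring
    have h2 : B (x + y) * B (-(x + y)) - B 0 * B 0 = 2 * Sxx := by rw [hSxxv]; ring
    have h3 : B (x - y) * B (-(x - y)) - B 0 * B 0 = 2 * Syy := by rw [hSyyv]; ring
    rw [h1, h2, h3]
    nlinarith [hd]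
  exact Real.abs_le_sqrt hsq

noncomputable def Efun {ι : Type*} (p q : ι → ℝ) (i : ι) (t : ℝ) : ℝ :=
  if t = 1 / 2 then p i * (Real.log (p i) - Real.log (q i)) - p i + q i
  else if t = -(1 / 2) then p i - q i - q i * (Real.log (p i) - Real.log (q i))
  else (p i ^ (t + 1 / 2) * q i ^ (1 / 2 - t) - (t + 1 / 2) * p i - (1 / 2 - t) * q i) /
    ((t + 1 / 2) * (t - 1 / 2))

noncomputable def Dfun {ι : Type*} (p q : ι → ℝ) (t : ℝ) : ℝ := ∑' i, Efun p q i t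

section Sums

variable {ι : Type*} (p q : ι → ℝ)
variable (hp : ∀ i, 0 < p i) (hq : ∀ i, 0 < q i)
variable (hp1 : ∑' i, p i = 1) (hq1 : ∑' i, q i = 1)
variable (hmom : ∀ s : ℝ, Summable (fun i => p i ^ s * q i ^ (1 - s)))
variable (hpq : Summable (fun i => p i * Real.log (p i / q i)))
variable (hqp : Summable (fun i => q i * Real.log (q i / p i)))

include hp1 in
lemma summable_p : Summable p := by
  by_contra h
  rw [tsum_eq_zero_of_not_summable h] at hp1
  norm_num at hp1

include hq1 in
lemma summable_q : Summable q := by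
  by_contra h
  rw [tsum_eq_zero_of_not_summable h] at hq1
  norm_num at hq1

include hp hq hpq in
lemma summable_pL : Summable (fun i => p i * (Real.log (p i) - Real.log (q i))) :=
  hpq.congr fun i => by rw [Real.log_div (hp i).ne' (hq i).ne']

include hp hq hqp in
lemma summable_qL : Summable (fun i => q i * (Real.log (p i) - Real.log (q i))) :=
  hqp.neg.congr fun i => by rw [Real.log_div (hq i).ne' (hp i).ne']; ring

include hmom in
lemma summable_mom' (t : ℝ) : Summable (fun i => p i ^ (t + 1 / 2) * q i ^ (1 / 2 - t)) :=
  (hmom (t + 1 / 2)).congr fun i => by rw [show (1:ℝ) - (t + 1 / 2) = 1 / 2 - t by ring]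

include hp hq hp1 hq1 hmom hpq hqp in
lemma summable_Efun (t : ℝ) : Summable (fun i => Efun p q i t) := by
  have sp := summable_p p hp1
  have sq := summable_q q hq1
  by_cases ht1 : t = 1 / 2
  · simp only [Efun, if_pos ht1]
    exact ((summable_pL p q hp hq hpq).sub sp).add sq
  by_cases ht2 : t = -(1 / 2)
  · simp only [Efun, if_neg ht1, if_pos ht2]
    exact (sp.sub sq).sub (summable_qL p q hp hq hqp)
  · simp only [Efun, if_neg ht1, if_neg ht2]
    exact (((summable_mom' p q hmom t).sub (sp.mul_left _)).sub (sq.mul_left _)).div_const _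

include hp hq hp1 hq1 hmom hpq hqp in
lemma Dfun_apply (t : ℝ) (ht1 : t ≠ 1 / 2) (ht2 : t ≠ -(1 / 2)) :
    Dfun p q t = ((∑' i, p i ^ (t + 1 / 2) * q i ^ (1 / 2 - t)) - 1) /
      ((t + 1 / 2) * (t - 1 / 2)) := by
  have sp := summable_p p hp1
  have sq := summable_q q hq1
  have hm := summable_mom' p q hmom t
  unfold Dfun Efun
  simp only [if_neg ht1, if_neg ht2]
  rw [tsum_div_const, Summable.tsum_sub (hm.sub (sp.mul_left _)) (sq.mul_left _),
    Summable.tsum_sub hm (sp.mul_left _), tsum_mul_left, tsum_mul_left, hp1, hq1]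
  congr 1
  ring

include hp hq hp1 hq1 hpq in
lemma Dfun_half : Dfun p q (1 / 2) = ∑' i, p i * Real.log (p i / q i) := by
  have sp := summable_p p hp1
  have sq := summable_q q hq1
  have hL := summable_pL p q hp hq hpq
  have hE : ∀ i, Efun p q i (1 / 2) =
      p i * (Real.log (p i) - Real.log (q i)) - p i + q i := by
    intro i; unfold Efun; norm_num
  unfold Dfun
  rw [tsum_congr hE, Summable.tsum_add (hL.sub sp) sq, Summable.tsum_sub hL sp, hp1, hq1,
    show (∑' i, p i * (Real.log (p i) - Real.log (q i))) = ∑' i, p i * Real.log (p i / q i)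
      from tsum_congr fun i => by rw [Real.log_div (hp i).ne' (hq i).ne']]
  ring

include hp hq hp1 hq1 hqp in
lemma Dfun_neghalf : Dfun p q (-(1 / 2)) = ∑' i, q i * Real.log (q i / p i) := by
  have sp := summable_p p hp1
  have sq := summable_q q hq1
  have hL := summable_qL p q hp hq hqp
  have hE : ∀ i, Efun p q i (-(1 / 2)) =
      p i - q i - q i * (Real.log (p i) - Real.log (q i)) := by
    intro i; unfold Efun; norm_num
  unfold Dfun
  rw [tsum_congr hE, Summable.tsum_sub (sp.sub sq) hL, Summable.tsum_sub sp sq, hp1, hq1]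
  have h1 : ∑' i, q i * Real.log (q i / p i) = -∑' i, q i * (Real.log (p i) - Real.log (q i)) := by
    rw [← tsum_neg]
    exact tsum_congr fun i => by rw [Real.log_div (hq i).ne' (hp i).ne']; ring
  rw [h1]
  ring

include hp hq hp1 hq1 hmom hpq hqp in
lemma relDiv_left (s : ℝ) : relDiv p q s = Dfun p q (s - 1 / 2) := by
  by_cases hs0 : s = 0
  · subst hs0
    rw [show (0:ℝ) - 1/2 = -(1/2) by norm_num, Dfun_neghalf p q hp hq hp1 hq1 hqp]
    simp [relDiv]
  by_cases hs1 : s = 1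
  · subst hs1
    rw [show (1:ℝ) - 1/2 = 1/2 by norm_num, Dfun_half p q hp hq hp1 hq1 hpq]
    simp [relDiv]
  · rw [Dfun_apply p q hp hq hp1 hq1 hmom hpq hqp (s - 1/2)
      (by intro h; apply hs1; linarith) (by intro h; apply hs0; linarith)]
    rw [show (s - 1/2) + 1/2 = s by ring, show (1:ℝ)/2 - (s - 1/2) = 1 - s by ring,
      show (s - 1/2) - 1/2 = s - 1 by ring]
    simp [relDiv, hs0, hs1]

include hp hq hp1 hq1 hmom hpq hqp in
lemma relDiv_right (s : ℝ) : relDiv q p s = Dfun p q (1 / 2 - s) := by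
  by_cases hs0 : s = 0
  · subst hs0
    rw [show (1:ℝ)/2 - 0 = 1/2 by norm_num, Dfun_half p q hp hq hp1 hq1 hpq]
    simp [relDiv]
  by_cases hs1 : s = 1
  · subst hs1
    rw [show (1:ℝ)/2 - 1 = -(1/2) by norm_num, Dfun_neghalf p q hp hq hp1 hq1 hqp]
    simp [relDiv]
  · rw [Dfun_apply p q hp hq hp1 hq1 hmom hpq hqp (1/2 - s)
      (by intro h; apply hs0; linarith) (by intro h; apply hs1; linarith)]
    rw [show (1:ℝ)/2 - s + 1/2 = 1 - s by ring, show (1:ℝ)/2 - (1/2 - s) = s by ring,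
      show (1:ℝ)/2 - s - 1/2 = -s by ring]
    rw [relDiv]
    rw [if_neg hs0, if_neg hs1]
    congr 1
    · congr 1
      exact tsum_congr fun i => mul_comm _ _
    · ring

include hp hq hp1 hq1 hmom hpq hqp in
lemma Dfun_zero : Dfun p q 0 = 2 * hellingerSq p q := by
  have sp := summable_p p hp1
  have sq := summable_q q hq1
  have hW : Summable (fun i => Real.sqrt (p i) * Real.sqrt (q i)) :=
    (hmom (1/2)).congr fun i => by
      rw [Real.sqrt_eq_rpow, Real.sqrt_eq_rpow]; norm_num
  have hHSval : hellingerSq p q = 2 - 2 * ∑' i, Real.sqrt (p i) * Real.sqrt (q i) := by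
    unfold hellingerSq
    have hpt : ∀ i, (Real.sqrt (p i) - Real.sqrt (q i)) ^ 2 =
        p i + q i - 2 * (Real.sqrt (p i) * Real.sqrt (q i)) := by
      intro i
      have h1 : Real.sqrt (p i) ^ 2 = p i := Real.sq_sqrt (hp i).le
      have h2 : Real.sqrt (q i) ^ 2 = q i := Real.sq_sqrt (hq i).le
      nlinarith [h1, h2]
    rw [tsum_congr hpt, Summable.tsum_sub (sp.add sq) (hW.mul_left 2), Summable.tsum_add sp sq, tsum_mul_left,
      hp1, hq1]
    ring
  rw [Dfun_apply p q hp hq hp1 hq1 hmom hpq hqp 0 (by norm_num) (by norm_num), hHSval]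
  have hWt : ∑' i, p i ^ ((0:ℝ) + 1/2) * q i ^ ((1:ℝ)/2 - 0) =
      ∑' i, Real.sqrt (p i) * Real.sqrt (q i) := by
    refine tsum_congr fun i => ?_
    rw [Real.sqrt_eq_rpow, Real.sqrt_eq_rpow]
    norm_num
  rw [hWt, div_eq_iff (by norm_num)]
  ring

include hp hq hp1 hq1 hmom hpq hqp in
lemma symP_eq (c : ℝ) : symP p q c =
    Dfun p q (c - 1 / 2) * Dfun p q (-(c - 1 / 2)) - Dfun p q 0 * Dfun p q 0 := by
  unfold symP
  rw [relDiv_left p q hp hq hp1 hq1 hmom hpq hqp c,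
    relDiv_right p q hp hq hp1 hq1 hmom hpq hqp c,
    show (1:ℝ)/2 - c = -(c - 1/2) by ring,
    Dfun_zero p q hp hq hp1 hq1 hmom hpq hqp]
  ring

include hp hq hp1 hq1 hmom hpq hqp in
lemma exists_rep : ∃ ν : Measure ℝ, IsFiniteMeasure ν ∧
    (∀ t : ℝ, Integrable (fun ω => Real.exp (ω * t)) ν) ∧
    (∀ t : ℝ, ∫ ω, Real.exp (ω * t) ∂ν = Dfun p q t) := by
  classical
  set Λ : ι → ℝ := fun i => Real.log (p i) - Real.log (q i) with hΛdef
  set g : ι → ℝ → ℝ := fun i u =>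
    q i * Λ i * (Real.exp (Λ i * (1 - u / 2)) - Real.exp (Λ i * (u / 2))) with hgdef
  have hgcont : ∀ i, Continuous (g i) := by
    intro i; simp only [hgdef]; fun_prop
  clear_value Λ g
  have hg0 : ∀ i, ∀ u ∈ Set.Icc (0:ℝ) 1, 0 ≤ g i u := by
    intro i u hu
    have hu1 : 0 ≤ u := hu.1
    have hu2 : u ≤ 1 := hu.2
    rcases le_or_gt 0 (Λ i) with hL | hL
    · have hE : Real.exp (Λ i * (u / 2)) ≤ Real.exp (Λ i * (1 - u / 2)) :=
        Real.exp_le_exp.mpr (mul_le_mul_of_nonneg_left (by linarith) hL)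
      have h2 := mul_nonneg (mul_nonneg (hq i).le hL) (sub_nonneg.2 hE)
      simpa only [hgdef] using h2
    · have hE : Real.exp (Λ i * (1 - u / 2)) ≤ Real.exp (Λ i * (u / 2)) :=
        Real.exp_le_exp.mpr (mul_le_mul_of_nonpos_left (by linarith) hL.le)
      have h2 := mul_nonneg (mul_nonneg (hq i).le (neg_nonneg.2 hL.le)) (sub_nonneg.2 hE)
      have hrw : g i u = q i * -Λ i *
          (Real.exp (Λ i * (u / 2)) - Real.exp (Λ i * (1 - u / 2))) := by
        simp only [hgdef]; ring
      rw [hrw]; exact h2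
  set μm : ι → Measure ℝ := fun i =>
    ((volume.restrict (Set.Icc (0:ℝ) 1)).withDensity (fun u => ENNReal.ofReal (g i u))).map
      (fun u => Λ i * u) with hμdef
  set ν := Measure.sum μm with hνdef
  clear_value μm ν
  -- basic facts
  have hqexp : ∀ i, q i * Real.exp (Λ i) = p i := by
    intro i
    simp only [hΛdef]
    rw [Real.exp_sub, Real.exp_log (hp i), Real.exp_log (hq i)]
    rw [mul_comm (q i) (p i / q i), div_mul_cancel₀ _ (hq i).ne']
  have hexpΛ : ∀ i, Real.exp (Λ i) = p i / q i := by
    intro i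
    rw [eq_div_iff (hq i).ne', mul_comm]
    exact hqexp i
  -- the key integral computation
  have hJ : ∀ i (t : ℝ),
      ∫ u in Set.Icc (0:ℝ) 1, Real.exp (Λ i * u * t) * g i u = Efun p q i t := by
    intro i t
    have base : ∫ u in Set.Icc (0:ℝ) 1, Real.exp (Λ i * u * t) * g i u
        = q i * Λ i * (Real.exp (Λ i) * phiExp (Λ i * (t - 1/2)) - phiExp (Λ i * (t + 1/2))) := by
      rw [MeasureTheory.integral_Icc_eq_integral_Ioc, ← intervalIntegral.integral_of_le zero_le_one]
      have hptw : ∀ u : ℝ, Real.exp (Λ i * u * t) * g i u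
          = q i * Λ i * (Real.exp (Λ i) * Real.exp ((Λ i * (t - 1/2)) * u)
              - Real.exp ((Λ i * (t + 1/2)) * u)) := by
        intro u
        have e1 : Real.exp (Λ i * u * t) * Real.exp (Λ i * (1 - u / 2))
            = Real.exp (Λ i) * Real.exp ((Λ i * (t - 1/2)) * u) := by
          rw [← Real.exp_add, ← Real.exp_add]; congr 1; ring
        have e2 : Real.exp (Λ i * u * t) * Real.exp (Λ i * (u / 2))
            = Real.exp ((Λ i * (t + 1/2)) * u) := by
          rw [← Real.exp_add]; congr 1; ring
        calc Real.exp (Λ i * u * t) * g i u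
            = Real.exp (Λ i * u * t) * Real.exp (Λ i * (1 - u / 2)) * (q i * Λ i)
              - Real.exp (Λ i * u * t) * Real.exp (Λ i * (u / 2)) * (q i * Λ i) := by
              simp only [hgdef]; ring
          _ = q i * Λ i * (Real.exp (Λ i) * Real.exp ((Λ i * (t - 1/2)) * u)
              - Real.exp ((Λ i * (t + 1/2)) * u)) := by rw [e1, e2]; ring
      simp only [hptw]
      rw [intervalIntegral.integral_const_mul,
        intervalIntegral.integral_sub
          ((show Continuous fun u : ℝ => Real.exp (Λ i) * Real.exp ((Λ i * (t - 1/2)) * u)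
              by fun_prop).intervalIntegrable 0 1)
          ((show Continuous fun u : ℝ => Real.exp ((Λ i * (t + 1/2)) * u)
              by fun_prop).intervalIntegrable 0 1),
        intervalIntegral.integral_const_mul, integral_exp_phi, integral_exp_phi]
    rw [base]
    by_cases hL : Λ i = 0
    · have hpq' : p i = q i := by
        have h := hqexp i; rw [hL, Real.exp_zero, mul_one] at h; exact h.symm
      rw [hL]
      simp only [mul_zero, zero_mul]
      unfold Efun
      split_ifs with h1 h2
      · rw [hpq']; ring
      · rw [hpq']; ring
      · rw [hpq', ← Real.rpow_add (hq i), show (t + 1/2) + (1/2 - t) = (1:ℝ) by ring,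
          Real.rpow_one, show q i - (t + 1/2) * q i - (1/2 - t) * q i = 0 by ring, zero_div]
    · have hE : Real.exp (Λ i) ≠ 0 := Real.exp_ne_zero (Λ i)
      have hlog : Real.log (p i) - Real.log (q i) = Λ i := by simp [hΛdef]
      by_cases ht1 : t = 1 / 2
      · subst ht1
        rw [show Λ i * ((1:ℝ)/2 - 1/2) = 0 by ring, show Λ i * ((1:ℝ)/2 + 1/2) = Λ i by ring,
          phiExp_zero, phiExp_ne hL]
        unfold Efun
        rw [if_pos rfl, hlog, ← hqexp i]
        field_simp
        ring
      by_cases ht2 : t = -(1 / 2)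
      · subst ht2
        rw [show Λ i * (-(1/2:ℝ) - 1/2) = -Λ i by ring, show Λ i * (-(1/2:ℝ) + 1/2) = 0 by ring,
          phiExp_ne (neg_ne_zero.mpr hL), phiExp_zero, Real.exp_neg]
        unfold Efun
        rw [if_neg (by norm_num), if_pos rfl, hlog, ← hqexp i]
        field_simp
        ring
      · have hden1 : Λ i * (t - 1/2) ≠ 0 :=
          mul_ne_zero hL (sub_ne_zero_of_ne ht1)
        have hden2 : Λ i * (t + 1/2) ≠ 0 := by
          refine mul_ne_zero hL ?_
          intro h; apply ht2; linarith
        have ht1' : t - 1/2 ≠ 0 := sub_ne_zero_of_ne ht1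
        have ht2' : t + 1/2 ≠ 0 := by intro h; apply ht2; linarith
        have hden3 : (t + 1/2) * (t - 1/2) ≠ 0 := mul_ne_zero ht2' ht1'
        rw [phiExp_ne hden1, phiExp_ne hden2]
        unfold Efun
        rw [if_neg ht1, if_neg ht2]
        have hrp : p i ^ (t + 1/2) * q i ^ ((1:ℝ)/2 - t) = q i * Real.exp (Λ i * (t + 1/2)) := by
          rw [Real.rpow_def_of_pos (hp i), Real.rpow_def_of_pos (hq i), ← Real.exp_add]
          conv_rhs => rw [← Real.exp_log (hq i), ← Real.exp_add]
          congr 1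
          simp only [hΛdef]
          ring
        have hshift : Real.exp (Λ i * (t - 1/2)) = Real.exp (Λ i * (t + 1/2)) / Real.exp (Λ i) := by
          rw [eq_div_iff hE, ← Real.exp_add]; congr 1; ring
        rw [hrp, hshift, ← hqexp i]
        have hcanc : Real.exp (Λ i) * (Real.exp (Λ i * (t + 1/2)) / Real.exp (Λ i) - 1)
            = Real.exp (Λ i * (t + 1/2)) - Real.exp (Λ i) := by
          field_simp
        rw [show Real.exp (Λ i) * ((Real.exp (Λ i * (t + 1/2)) / Real.exp (Λ i) - 1) /
              (Λ i * (t - 1/2))) =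
            (Real.exp (Λ i * (t + 1/2)) - Real.exp (Λ i)) / (Λ i * (t - 1/2)) from by
          rw [← mul_div_assoc, hcanc]]
        rw [div_sub_div _ _ hden1 hden2, ← mul_div_assoc,
          div_eq_div_iff (mul_ne_zero hden1 hden2) hden3]
        ring
    -- end hJ
  have hE0 : ∀ i (t : ℝ), 0 ≤ Efun p q i t := by
    intro i t
    rw [← hJ i t]
    exact MeasureTheory.setIntegral_nonneg measurableSet_Icc
      fun u hu => mul_nonneg (Real.exp_pos _).le (hg0 i u hu)
  have hSumE : ∀ t : ℝ, Summable (fun i => Efun p q i t) :=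
    summable_Efun p q hp hq hp1 hq1 hmom hpq hqp
  have hIntOn : ∀ i (t : ℝ),
      IntegrableOn (fun u => Real.exp (Λ i * u * t) * g i u) (Set.Icc (0:ℝ) 1) volume := by
    intro i t
    exact ((show Continuous fun u : ℝ => Real.exp (Λ i * u * t) by fun_prop).mul
      (hgcont i)).integrableOn_Icc
  have hlint : ∀ (t : ℝ) i,
      ∫⁻ ω, ENNReal.ofReal (Real.exp (ω * t)) ∂(μm i) = ENNReal.ofReal (Efun p q i t) := by
    intro t i
    have hfm0 : Measurable fun ω : ℝ => Real.exp (ω * t) := by fun_prop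
    have hfm : Measurable fun ω : ℝ => ENNReal.ofReal (Real.exp (ω * t)) :=
      hfm0.ennreal_ofReal
    have hgm : Measurable fun u : ℝ => Λ i * u := by fun_prop
    have hfm20 : Measurable fun u : ℝ => Real.exp (Λ i * u * t) := by fun_prop
    have hfm2 : Measurable fun u : ℝ => ENNReal.ofReal (Real.exp (Λ i * u * t)) :=
      hfm20.ennreal_ofReal
    simp only [hμdef]
    rw [MeasureTheory.lintegral_map hfm hgm]
    rw [lintegral_withDensity_eq_lintegral_mul _
      ((hgcont i).measurable.ennreal_ofReal) hfm2]
    have hae : ∀ᵐ u ∂(volume.restrict (Set.Icc (0:ℝ) 1)),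
        ((fun u => ENNReal.ofReal (g i u)) * fun u => ENNReal.ofReal (Real.exp (Λ i * u * t))) u =
        ENNReal.ofReal (Real.exp (Λ i * u * t) * g i u) := by
      refine (ae_restrict_iff' measurableSet_Icc).mpr (Filter.Eventually.of_forall fun u hu => ?_)
      simp only [Pi.mul_apply]
      rw [← ENNReal.ofReal_mul (hg0 i u hu), mul_comm]
    rw [lintegral_congr_ae hae,
      ← MeasureTheory.ofReal_integral_eq_lintegral_ofReal (hIntOn i t)
        ((ae_restrict_iff' measurableSet_Icc).mpr (Filter.Eventually.of_forall fun u hu =>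
          mul_nonneg (Real.exp_pos _).le (hg0 i u hu))),
      hJ i t]
  have hlintν : ∀ t : ℝ,
      ∫⁻ ω, ENNReal.ofReal (Real.exp (ω * t)) ∂ν = ENNReal.ofReal (Dfun p q t) := by
    intro t
    rw [hνdef, MeasureTheory.lintegral_sum_measure]
    rw [tsum_congr (hlint t), ← ENNReal.ofReal_tsum_of_nonneg (fun i => hE0 i t) (hSumE t)]
    rfl
  have hfin : IsFiniteMeasure ν := by
    constructor
    have h0 : ∫⁻ ω, ENNReal.ofReal (Real.exp (ω * 0)) ∂ν = ENNReal.ofReal (Dfun p q 0) :=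
      hlintν 0
    simp only [mul_zero, Real.exp_zero, ENNReal.ofReal_one, lintegral_one] at h0
    rw [h0]
    exact ENNReal.ofReal_lt_top
  have hInt : ∀ t : ℝ, Integrable (fun ω => Real.exp (ω * t)) ν := by
    intro t
    have hc : Continuous fun ω : ℝ => Real.exp (ω * t) := by fun_prop
    refine ⟨hc.aestronglyMeasurable, ?_⟩
    rw [MeasureTheory.hasFiniteIntegral_iff_ofReal
      (Filter.Eventually.of_forall fun ω => (Real.exp_pos _).le)]
    rw [hlintν t]
    exact ENNReal.ofReal_lt_top
  refine ⟨ν, hfin, hInt, fun t => ?_⟩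
  have hIi : ∀ i, ∫ ω, Real.exp (ω * t) ∂(μm i) = Efun p q i t := by
    intro i
    have hgm : Measurable fun u : ℝ => Λ i * u := by fun_prop
    have hsm : ∀ ρ : Measure ℝ, AEStronglyMeasurable (fun ω : ℝ => Real.exp (ω * t)) ρ :=
      fun ρ => (show Continuous fun ω : ℝ => Real.exp (ω * t) by fun_prop).aestronglyMeasurable
    simp only [hμdef]
    rw [MeasureTheory.integral_map hgm.aemeasurable (hsm _)]
    have hdens : (fun u => ENNReal.ofReal (g i u)) = (fun u => ((g i u).toNNReal : ℝ≥0∞)) := rfl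
    rw [hdens, integral_withDensity_eq_integral_smul
      ((hgcont i).measurable.real_toNNReal) _]
    have hsi : ∫ u in Set.Icc (0:ℝ) 1, (g i u).toNNReal • Real.exp (Λ i * u * t) ∂volume
        = ∫ u in Set.Icc (0:ℝ) 1, Real.exp (Λ i * u * t) * g i u ∂volume := by
      refine MeasureTheory.setIntegral_congr_fun measurableSet_Icc fun u hu => ?_
      rw [NNReal.smul_def, smul_eq_mul, Real.coe_toNNReal _ (hg0 i u hu), mul_comm]
    rw [hsi, hJ i t]
  have h1 : ∫ ω, Real.exp (ω * t) ∂ν = ∑' i, ∫ ω, Real.exp (ω * t) ∂(μm i) := by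
    rw [hνdef]
    exact MeasureTheory.integral_sum_measure (hνdef ▸ hInt t)
  rw [h1]
  exact tsum_congr hIi

end Sums

end Thm8Aux

theorem theorem8_second {ι : Type*} [Countable ι] (p q : ι → ℝ)
    (hp : ∀ i, 0 < p i) (hq : ∀ i, 0 < q i)
    (hp1 : ∑' i, p i = 1) (hq1 : ∑' i, q i = 1)
    (hmom : ∀ s : ℝ, Summable (fun i => p i ^ s * q i ^ (1 - s)))
    (hpq : Summable (fun i => p i * Real.log (p i / q i)))
    (hqp : Summable (fun i => q i * Real.log (q i / p i)))
    (a b : ℝ) :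
    |symP p q a - symP p q b| ≤
      Real.sqrt (symP p q (a + b - 1 / 2) * symP p q (a - b + 1 / 2)) := by
  classical
  obtain ⟨ν, hfin, hInt, hval⟩ := Thm8Aux.exists_rep p q hp hq hp1 hq1 hmom hpq hqp
  haveI := hfin
  have key := Thm8Aux.cs_measure ν (Thm8Aux.Dfun p q) hInt hval (a - 1/2) (b - 1/2)
  have hsym := Thm8Aux.symP_eq p q hp hq hp1 hq1 hmom hpq hqp
  rw [hsym a, hsym b, hsym (a + b - 1/2), hsym (a - b + 1/2)]
  rw [show a + b - 1/2 - 1/2 = (a - 1/2) + (b - 1/2) by ring,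
    show a - b + 1/2 - 1/2 = (a - 1/2) - (b - 1/2) by ring,
    sub_sub_sub_cancel_right]
  exact key
end

section
/- (Theorem 9, upper bound) If p ≠ q, the Kullback–Leibler divergence satisfies K(p‖q) ≤ log(1 + χ²(p,q)) − (32/9) · (B·√(1 + χ²(p,q)) − 1)² / χ²(p,q), where B = B(p,q) is the Bhattacharya coefficient and χ²(p,q) is the χ²-distance of p from q. -/
/-- basic log bound: `1 - x⁻² ≤ 2 log x` for `x > 0`. -/
lemma pw0 (x : ℝ) (hx : 0 < x) : 1 - (x^2)⁻¹ ≤ 2 * Real.log x := by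
  have h := Real.log_le_sub_one_of_pos (show (0:ℝ) < (x^2)⁻¹ by positivity)
  rw [Real.log_inv, Real.log_pow] at h
  push_cast at h
  linarith

/-- scalar polynomial step -/
lemma scalar_step (w c D : ℝ) (hw : 0 < w) (hc : 0 < c)
    (hrel : (w^2+w+1) * c = D * (2*(w+1)*(w^2+1))) :
    32/9 * D^2 / c ≤ 4*(w+1)^2/(w*(w^2+2*w+3)) * D + (-((w+2)/(w*(w^2+2*w+3)))) * c := by
  have h9 : (0:ℝ) < w^2+2*w+3 := by nlinarith [sq_nonneg (w+1)]
  have hQ : (0:ℝ) < 2*(w+1)*(w^2+1) := by positivity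
  have hD : D = (w^2+w+1)*c/(2*(w+1)*(w^2+1)) := by
    field_simp
    linarith [hrel]
  have key2 : 8*(w^2+w+1)^2 ≤ 9*(w+1)^2*(w^2+1) := by
    nlinarith [sq_nonneg (w-1), mul_nonneg (sq_nonneg (w-1)) hw.le, hw]
  have e1 : 32/9*(((w^2+w+1)*c/(2*(w+1)*(w^2+1)))^2)/c
      = c*(8*(w^2+w+1)^2) / (9*(w+1)^2*(w^2+1)^2) := by
    field_simp
    ring
  have e2 : 4*(w+1)^2/(w*(w^2+2*w+3))*((w^2+w+1)*c/(2*(w+1)*(w^2+1)))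
      + (-((w+2)/(w*(w^2+2*w+3))))*c = c/(w^2+1) := by
    field_simp
    ring
  rw [hD, e1, e2, div_le_div_iff₀ (by positivity) (by positivity)]
  have h3 := mul_le_mul_of_nonneg_left key2 (by positivity : (0:ℝ) ≤ c*(w^2+1))
  nlinarith [h3]



lemma pw (w : ℝ) (hw : 0 < w) (x : ℝ) (hx : 0 < x) :
    4*(w+1)^2/(w*(w^2+2*w+3)) * (x-1) + (-((w+2)/(w*(w^2+2*w+3)))) * (x^2-1)
      + (w^2/(w^2+2*w+3)) * (1-(x^2)⁻¹) ≤ 2 * Real.log x := by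
  have h9 : (0:ℝ) < w^2+2*w+3 := by nlinarith [sq_nonneg (w+1)]
  have hden : (0:ℝ) < w*(w^2+2*w+3) := mul_pos hw h9
  set A : ℝ := 4*(w+1)^2/(w*(w^2+2*w+3)) with hA
  set Bc : ℝ := -((w+2)/(w*(w^2+2*w+3))) with hBc
  set Cc : ℝ := w^2/(w^2+2*w+3) with hCc
  set F : ℝ → ℝ := fun t => 2*Real.log t - (A*(t-1) + Bc*(t^2-1) + Cc*(1-(t^2)⁻¹)) with hF
  have hF1 : F 1 = 0 := by simp [hF, Real.log_one]
  have hder : ∀ y : ℝ, 0 < y →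
      HasDerivAt F (2*(y-1)*(y-w)^2*((w+2)*y+w) / (y^3*(w*(w^2+2*w+3)))) y := by
    intro y hy
    have hy0 : y ≠ 0 := ne_of_gt hy
    have h1 : HasDerivAt (fun t : ℝ => 2*Real.log t) (2*y⁻¹) y :=
      (Real.hasDerivAt_log hy0).const_mul 2
    have h2 : HasDerivAt (fun t : ℝ => A*(t-1)) (A*1) y :=
      ((hasDerivAt_id y).sub_const 1).const_mul A
    have h3 : HasDerivAt (fun t : ℝ => t^2) (2*y) y := by
      simpa using hasDerivAt_pow 2 y
    have h4 : HasDerivAt (fun t : ℝ => Bc*(t^2-1)) (Bc*(2*y)) y :=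
      (h3.sub_const 1).const_mul Bc
    have h5 : HasDerivAt (fun t : ℝ => (t^2)⁻¹) (-(2*y)/(y^2)^2) y :=
      h3.inv (pow_ne_zero 2 hy0)
    have h6 : HasDerivAt (fun t : ℝ => Cc*(1-(t^2)⁻¹)) (Cc*(0 - (-(2*y)/(y^2)^2))) y :=
      ((hasDerivAt_const y 1).sub h5).const_mul Cc
    have h7 := h1.sub ((h2.add h4).add h6)
    refine h7.congr_deriv ?_
    rw [hA, hBc, hCc]
    field_simp
    ring
  suffices h : 0 ≤ F x by
    rw [hF] at h
    simp only at h
    linarith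
  rcases le_total x 1 with hx1 | hx1
  · have hanti : AntitoneOn F (Set.Icc x 1) := by
      apply antitoneOn_of_deriv_nonpos (convex_Icc x 1)
      · intro y hy
        exact ((hder y (lt_of_lt_of_le hx hy.1)).differentiableAt.continuousAt).continuousWithinAt
      · intro y hy
        rw [interior_Icc] at hy
        exact ((hder y (lt_trans hx hy.1)).differentiableAt).differentiableWithinAt
      · intro y hy
        rw [interior_Icc] at hy
        have hy0 : 0 < y := lt_trans hx hy.1
        rw [(hder y hy0).deriv]
        apply div_nonpos_of_nonpos_of_nonneg
        · have h1 : y - 1 ≤ 0 := by linarith [hy.2]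
          have h2 : (0:ℝ) ≤ (y-w)^2 := sq_nonneg _
          have h3 : (0:ℝ) ≤ (w+2)*y+w := by nlinarith
          nlinarith [mul_nonneg h2 h3]
        · positivity
    have := hanti (Set.mem_Icc.2 ⟨le_rfl, hx1⟩) (Set.mem_Icc.2 ⟨hx1, le_rfl⟩) hx1
    rw [hF1] at this
    exact this
  · have hmono : MonotoneOn F (Set.Icc 1 x) := by
      apply monotoneOn_of_deriv_nonneg (convex_Icc 1 x)
      · intro y hy
        exact ((hder y (lt_of_lt_of_le one_pos hy.1)).differentiableAt.continuousAt).continuousWithinAt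
      · intro y hy
        rw [interior_Icc] at hy
        exact ((hder y (lt_trans one_pos hy.1)).differentiableAt).differentiableWithinAt
      · intro y hy
        rw [interior_Icc] at hy
        have hy0 : 0 < y := lt_trans one_pos hy.1
        rw [(hder y hy0).deriv]
        apply div_nonneg
        · have h1 : 0 ≤ y - 1 := by linarith [hy.1]
          have h2 : (0:ℝ) ≤ (y-w)^2 := sq_nonneg _
          have h3 : (0:ℝ) ≤ (w+2)*y+w := by nlinarith
          nlinarith [mul_nonneg h2 h3]
        · positivity
    have := hmono (Set.mem_Icc.2 ⟨le_rfl, hx1⟩) (Set.mem_Icc.2 ⟨hx1, le_rfl⟩) hx1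
    rw [hF1] at this
    exact this



lemma find_w (t : ℝ) (ht0 : 0 < t) (ht2 : t < 1/2) :
    ∃ w : ℝ, 0 < w ∧ (w^2+w+1)/(2*(w+1)*(w^2+1)) = t := by
  set φ : ℝ → ℝ := fun u => (u^2+u+1)/(2*(u+1)*(u^2+1)) with hφ
  set lo : ℝ := 1 - 2*t with hlo_def
  set hi : ℝ := 3/(2*t) with hhi_def
  have hlo : 0 < lo := by rw [hlo_def]; linarith
  have hhi3 : (3:ℝ) ≤ hi := by
    rw [hhi_def, le_div_iff₀ (by linarith)]
    nlinarith
  have hlohi : lo ≤ hi := by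
    have : lo < 1 := by rw [hlo_def]; linarith
    linarith
  have hcont : ContinuousOn φ (Set.Icc lo hi) := by
    apply ContinuousOn.div
    · fun_prop
    · fun_prop
    · intro u hu
      have hu0 : 0 < u := lt_of_lt_of_le hlo hu.1
      have h1 : (0:ℝ) < u + 1 := by linarith
      have h2 : (0:ℝ) < u^2 + 1 := by positivity
      exact (mul_pos (mul_pos two_pos h1) h2).ne'
  have hφlo : t ≤ φ lo := by
    have hlb : (1-lo)/2 ≤ φ lo := by
      rw [hφ]
      simp only
      rw [div_le_div_iff₀ two_pos (by nlinarith [sq_nonneg lo] : (0:ℝ) < 2*(lo+1)*(lo^2+1))]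
      nlinarith [sq_nonneg lo, sq_nonneg (lo^2), hlo.le]
    have : (1-lo)/2 = t := by rw [hlo_def]; ring
    linarith
  have hφhi : φ hi ≤ t := by
    have hub : φ hi ≤ 3/(2*hi) := by
      rw [hφ]
      simp only
      have hhi0 : (0:ℝ) < hi := by linarith
      rw [div_le_div_iff₀ (by nlinarith [sq_nonneg hi] : (0:ℝ) < 2*(hi+1)*(hi^2+1)) (by linarith)]
      nlinarith [hhi3, sq_nonneg hi]
    have : 3/(2*hi) = t := by
      rw [hhi_def]
      field_simp
    linarith
  have hsub := intermediate_value_Icc' hlohi hcont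
  obtain ⟨w, hwmem, hweq⟩ := hsub (Set.mem_Icc.2 ⟨hφhi, hφlo⟩)
  exact ⟨w, lt_of_lt_of_le hlo hwmem.1, hweq⟩



theorem theorem9_upper {ι : Type*} [Countable ι] (p q : ι → ℝ)
    (hp : ∀ i, 0 < p i) (hq : ∀ i, 0 < q i)
    (hp1 : ∑' i, p i = 1) (hq1 : ∑' i, q i = 1) (hne : p ≠ q)
    (hKL : Summable (fun i => p i * Real.log (p i / q i)))
    (hchi : Summable (fun i => (p i) ^ 2 / q i))
    (hB : Summable (fun i => Real.sqrt (p i * q i))) :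
    ∑' i, p i * Real.log (p i / q i) ≤
      Real.log (1 + ∑' i, (p i - q i) ^ 2 / q i) -
        32 / 9 *
          ((∑' i, Real.sqrt (p i * q i)) * Real.sqrt (1 + ∑' i, (p i - q i) ^ 2 / q i) - 1) ^ 2 /
          (∑' i, (p i - q i) ^ 2 / q i) := by
  have hpne : ∀ i, p i ≠ 0 := fun i => (hp i).ne'
  have hqne : ∀ i, q i ≠ 0 := fun i => (hq i).ne'
  have hP : Summable p := by
    by_contra h
    rw [tsum_eq_zero_of_not_summable h] at hp1
    exact one_ne_zero hp1.symm
  have hQ : Summable q := by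
    by_contra h
    rw [tsum_eq_zero_of_not_summable h] at hq1
    exact one_ne_zero hq1.symm
  have hchi2 : Summable (fun i => (p i - q i) ^ 2 / q i) :=
    ((hchi.sub (hP.mul_left 2)).add hQ).congr
      (fun i => by field_simp [hqne i]; ring)
  set c := ∑' i, (p i - q i) ^ 2 / q i with hc_def
  have hchival : ∑' i, p i ^ 2 / q i = 1 + c := by
    have h1 : c = ∑' i, ((p i ^ 2 / q i - 2 * p i) + q i) := by
      rw [hc_def]
      exact tsum_congr (fun i => by field_simp [hqne i]; ring)
    rw [Summable.tsum_add (hchi.sub (hP.mul_left 2)) hQ,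
        Summable.tsum_sub hchi (hP.mul_left 2), tsum_mul_left, hp1, hq1] at h1
    linarith
  have hc0 : 0 < c := by
    obtain ⟨i0, hi0⟩ := Function.ne_iff.1 hne
    refine Summable.tsum_pos hchi2 (fun i => div_nonneg (sq_nonneg _) (hq i).le) i0 ?_
    have h1 : p i0 - q i0 ≠ 0 := sub_ne_zero.2 hi0
    have h2 : 0 < (p i0 - q i0) ^ 2 := lt_of_le_of_ne (sq_nonneg _) (Ne.symm (pow_ne_zero 2 h1))
    exact div_pos h2 (hq i0)
  have hc1 : (0:ℝ) < 1 + c := by linarith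
  set sc := Real.sqrt (1 + c) with hsc_def
  have hsc : 0 < sc := Real.sqrt_pos.2 hc1
  have hsc2 : sc ^ 2 = 1 + c := Real.sq_sqrt hc1.le
  set B := ∑' i, Real.sqrt (p i * q i) with hB_def
  set K := ∑' i, p i * Real.log (p i / q i) with hK_def
  set z : ι → ℝ := fun i => Real.sqrt (q i / p i) * sc with hz_def
  have hz : ∀ i, 0 < z i := fun i => mul_pos (Real.sqrt_pos.2 (div_pos (hq i) (hp i))) hsc
  have hzsq : ∀ i, z i ^ 2 = q i / p i * (1 + c) := by
    intro i
    simp only [hz_def, mul_pow]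
    rw [Real.sq_sqrt (div_nonneg (hq i).le (hp i).le), hsc2]
  have hz2 : ∀ i, p i * z i ^ 2 = q i * (1 + c) := by
    intro i
    rw [hzsq i]
    field_simp [hpne i]
  have hzinv : ∀ i, p i * (z i ^ 2)⁻¹ = p i ^ 2 / q i * (1 + c)⁻¹ := by
    intro i
    rw [hzsq i]
    field_simp [hpne i, hqne i, hc1.ne']
  have hz1 : ∀ i, p i * z i = Real.sqrt (p i * q i) * sc := by
    intro i
    have key : p i * Real.sqrt (q i / p i) = Real.sqrt (p i * q i) := by
      have h1 : Real.sqrt (p i ^ 2) = p i := Real.sqrt_sq (hp i).le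
      calc p i * Real.sqrt (q i / p i)
          = Real.sqrt (p i ^ 2) * Real.sqrt (q i / p i) := by rw [h1]
        _ = Real.sqrt (p i ^ 2 * (q i / p i)) := (Real.sqrt_mul (by positivity) _).symm
        _ = Real.sqrt (p i * q i) := by
            rw [show p i ^ 2 * (q i / p i) = p i * q i by field_simp [hpne i]]
    simp only [hz_def]
    rw [← mul_assoc, key]
  have hlog : ∀ i, 2 * Real.log (z i) = Real.log (1 + c) - Real.log (p i / q i) := by
    intro i
    have h1 : Real.log (z i ^ 2) = 2 * Real.log (z i) := by
      rw [Real.log_pow]; push_cast; ring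
    rw [← h1, hzsq i, Real.log_mul (div_ne_zero (hqne i) (hpne i)) hc1.ne',
        Real.log_div (hqne i) (hpne i), Real.log_div (hpne i) (hqne i)]
    ring
  -- summability + tsum values
  have hS1 : Summable (fun i => p i * z i) := (hB.mul_right sc).congr (fun i => (hz1 i).symm)
  have hT1 : ∑' i, p i * z i = B * sc := by rw [tsum_congr hz1, tsum_mul_right]
  have hS2 : Summable (fun i => p i * z i ^ 2) :=
    (hQ.mul_right (1 + c)).congr (fun i => (hz2 i).symm)
  have hT2 : ∑' i, p i * z i ^ 2 = 1 + c := by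
    rw [tsum_congr hz2, tsum_mul_right, hq1, one_mul]
  have hS3 : Summable (fun i => p i * (z i ^ 2)⁻¹) :=
    (hchi.mul_right (1 + c)⁻¹).congr (fun i => (hzinv i).symm)
  have hT3 : ∑' i, p i * (z i ^ 2)⁻¹ = 1 := by
    rw [tsum_congr hzinv, tsum_mul_right, hchival, mul_inv_cancel₀ hc1.ne']
  have hS4 : Summable (fun i => p i * (2 * Real.log (z i))) :=
    ((hP.mul_right (Real.log (1 + c))).sub hKL).congr (fun i => by rw [hlog i]; ring)
  have hT4 : ∑' i, p i * (2 * Real.log (z i)) = Real.log (1 + c) - K := by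
    rw [tsum_congr (fun i => (by rw [hlog i]; ring :
          p i * (2 * Real.log (z i)) = p i * Real.log (1 + c) - p i * Real.log (p i / q i))),
        Summable.tsum_sub (hP.mul_right _) hKL, tsum_mul_right, hp1, one_mul, ← hK_def]
  -- main summation engine
  have key : ∀ α β γ : ℝ,
      (∀ x : ℝ, 0 < x → α*(x-1) + β*(x^2-1) + γ*(1-(x^2)⁻¹) ≤ 2 * Real.log x) →
      α*(B*sc-1) + β*c ≤ Real.log (1+c) - K := by
    intro α β γ hpt
    have hE1 : Summable (fun i => p i * z i - p i) := hS1.sub hP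
    have hE1v : ∑' i, (p i * z i - p i) = B*sc - 1 := by
      rw [Summable.tsum_sub hS1 hP, hT1, hp1]
    have hE2 : Summable (fun i => p i * z i ^ 2 - p i) := hS2.sub hP
    have hE2v : ∑' i, (p i * z i ^ 2 - p i) = c := by
      rw [Summable.tsum_sub hS2 hP, hT2, hp1]; ring
    have hE3 : Summable (fun i => p i - p i * (z i ^ 2)⁻¹) := hP.sub hS3
    have hE3v : ∑' i, (p i - p i * (z i ^ 2)⁻¹) = 0 := by
      rw [Summable.tsum_sub hP hS3, hT3, hp1]; ring
    have hGv : ∑' i, (p i * (2*Real.log (z i)) - α*(p i * z i - p i)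
        - β*(p i * z i ^ 2 - p i) - γ*(p i - p i * (z i ^ 2)⁻¹))
        = (Real.log (1+c) - K) - α*(B*sc-1) - β*c - γ*0 := by
      rw [Summable.tsum_sub ((hS4.sub (hE1.mul_left α)).sub (hE2.mul_left β)) (hE3.mul_left γ),
          Summable.tsum_sub (hS4.sub (hE1.mul_left α)) (hE2.mul_left β),
          Summable.tsum_sub hS4 (hE1.mul_left α),
          tsum_mul_left, tsum_mul_left, tsum_mul_left, hT4, hE1v, hE2v, hE3v]
    have hGnn : 0 ≤ ∑' i, (p i * (2*Real.log (z i)) - α*(p i * z i - p i)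
        - β*(p i * z i ^ 2 - p i) - γ*(p i - p i * (z i ^ 2)⁻¹)) := by
      apply tsum_nonneg
      intro i
      have h := hpt (z i) (hz i)
      have heq : p i * (2*Real.log (z i)) - α*(p i * z i - p i)
          - β*(p i * z i ^ 2 - p i) - γ*(p i - p i * (z i ^ 2)⁻¹)
          = p i * (2*Real.log (z i) - (α*(z i - 1) + β*(z i ^ 2 - 1) + γ*(1 - (z i ^ 2)⁻¹))) := by
        ring
      rw [heq]
      exact mul_nonneg (hp i).le (by linarith)
    rw [hGv] at hGnn
    linarith
  -- D ≥ 0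
  have hDnn : 0 ≤ B*sc - 1 := by
    have hval : ∑' i, (p i * z i + (1/2)*(p i * (z i ^ 2)⁻¹) - (3/2)*p i) = B*sc - 1 := by
      rw [Summable.tsum_sub (hS1.add (hS3.mul_left (1/2))) (hP.mul_left (3/2)),
          Summable.tsum_add hS1 (hS3.mul_left (1/2)), tsum_mul_left, tsum_mul_left,
          hT1, hT3, hp1]
      ring
    rw [← hval]
    apply tsum_nonneg
    intro i
    have h1 : 0 < z i := hz i
    have hkey : 0 ≤ z i + (1/2)*(z i ^ 2)⁻¹ - 3/2 := by
      have h2 : z i + (1/2)*(z i ^ 2)⁻¹ - 3/2 = (z i - 1)^2*(2*z i+1) / (2*z i ^ 2) := by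
        field_simp
        ring
      rw [h2]; positivity
    have heq : p i * z i + (1/2)*(p i * (z i ^ 2)⁻¹) - (3/2)*p i
        = p i * (z i + (1/2)*(z i ^ 2)⁻¹ - 3/2) := by ring
    rw [heq]
    exact mul_nonneg (hp i).le hkey
  -- 2D < c
  have h2D : 2*(B*sc - 1) < c := by
    by_cases hall : ∀ i, z i = 1
    · exfalso
      have hpq : ∀ i, p i = q i * (1+c) := by
        intro i
        have h := hz2 i
        rw [hall i] at h
        simpa using h
      have h1 : ∑' i, p i = 1 + c := by
        rw [tsum_congr hpq, tsum_mul_right, hq1, one_mul]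
      rw [hp1] at h1
      linarith
    · push_neg at hall
      obtain ⟨i0, hi0⟩ := hall
      have hsum : Summable (fun i => p i * z i ^ 2 - 2*(p i * z i) + p i) :=
        (hS2.sub (hS1.mul_left 2)).add hP
      have hval : ∑' i, (p i * z i ^ 2 - 2*(p i * z i) + p i) = c - 2*(B*sc-1) := by
        rw [Summable.tsum_add (hS2.sub (hS1.mul_left 2)) hP, Summable.tsum_sub hS2 (hS1.mul_left 2),
            tsum_mul_left, hT2, hT1, hp1]
        ring
      have hpos : 0 < ∑' i, (p i * z i ^ 2 - 2*(p i * z i) + p i) := by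
        refine Summable.tsum_pos hsum (fun i => ?_) i0 ?_
        · have heq : p i * z i ^ 2 - 2*(p i * z i) + p i = p i * (z i - 1)^2 := by ring
          rw [heq]; exact mul_nonneg (hp i).le (sq_nonneg _)
        · have heq : p i0 * z i0 ^ 2 - 2*(p i0 * z i0) + p i0 = p i0 * (z i0 - 1)^2 := by ring
          rw [heq]
          have h1 : z i0 - 1 ≠ 0 := sub_ne_zero.2 hi0
          have h2 : 0 < (z i0 - 1)^2 := lt_of_le_of_ne (sq_nonneg _) (Ne.symm (pow_ne_zero 2 h1))
          exact mul_pos (hp i0) h2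
      rw [hval] at hpos
      linarith
  -- conclude
  rcases eq_or_lt_of_le hDnn with hD0 | hD0
  · have h := key 0 0 1 (fun x hx => by simpa using pw0 x hx)
    rw [← hD0]
    norm_num
    simp only [zero_mul, zero_add, one_mul] at h
    linarith
  · have ht0 : 0 < (B*sc-1)/c := div_pos hD0 hc0
    have ht2 : (B*sc-1)/c < 1/2 := by rw [div_lt_iff₀ hc0]; linarith
    obtain ⟨w, hw0, hweq⟩ := find_w ((B*sc-1)/c) ht0 ht2
    have hQpos : (0:ℝ) < 2*(w+1)*(w^2+1) := by positivity
    rw [div_eq_div_iff hQpos.ne' hc0.ne'] at hweq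
    have h1 := key (4*(w+1)^2/(w*(w^2+2*w+3))) (-((w+2)/(w*(w^2+2*w+3)))) (w^2/(w^2+2*w+3))
      (fun x hx => pw w hw0 x hx)
    have h2 := scalar_step w c (B*sc-1) hw0 hc0 hweq
    linarith
end
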